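/- arXiv:1901.07944 — 4 statements merged into one kernel-verified Lean document; each statement's English description precedes it below -/
import Mathlib

section
/- Let P = (C, {P_i}_{i=1}^{ℓ−1}, A_1, B_ℓ) be a strong Path-of-Sets System of length ℓ and width w, for some ℓ, w ≥ 1, with C = (C_1,…,C_ℓ). Suppose we are given, for all 1 ≤ i ≤ ⌈ℓ/2⌉, subsets A'_{2i−1} ⊆ A_{2i−1} and B'_{2i−1} ⊆ B_{2i−1} of cardinality w' each. Then there is a Path-of-Sets System P̂ = (Ĉ, {P̂_i}_{i=1}^{⌈ℓ/2⌉−1}, Â_1, B̂_{⌈ℓ/2⌉}) of length ⌈ℓ/2⌉ and width w', such that Ĉ = (C_1, C_3, …, C_{2⌈ℓ/2⌉−1}), and for each 1 ≤ i ≤ ⌈ℓ/2⌉, Â_i = A'_{2i−1} and B̂_i = B'_{2i−1}. Moreover, if the even-indexed clusters are not needed for the new system: the new system P̂ is strong whenever each A'_{2i−1} is node-well-linked, each B'_{2i−1} is node-well-linked, and (A'_{2i−1},B'_{2i−1}) are node-linked in C_{2i−1}. -/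
open SimpleGraph

/-- A simple path in a graph `G`, packaged with its two endpoints. -/
structure GraphPath {V : Type} (G : SimpleGraph V) where
  first : V
  last : V
  walk : G.Walk first last
  isPath : walk.IsPath

namespace GraphPath

variable {V : Type} {G : SimpleGraph V}

/-- The set of vertices of a path. -/
def support (p : GraphPath G) : Set V := {v | v ∈ p.walk.support}

/-- The set of edges of a path. -/
def edges (p : GraphPath G) : Set (Sym2 V) := {e | e ∈ p.walk.edges}

/-- The path is contained in the subgraph `H` of `G`. -/
def InSubgraph (p : GraphPath G) (H : G.Subgraph) : Prop :=
  p.support ⊆ H.verts ∧ p.edges ⊆ H.edgeSet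

/-- `p` is a contiguous subpath of `q` (its vertex sequence is a contiguous
subsequence of that of `q`). -/
def IsSubpathOf (p q : GraphPath G) : Prop :=
  p.walk.support <:+: q.walk.support

end GraphPath

section BasicDefs

variable {V : Type}

/-- `u` occurs strictly before `v` on the path `p`. -/
def beforeOn {G : SimpleGraph V} (p : GraphPath G) (u v : V) : Prop :=
  ∃ l₁ l₂ l₃ : List V, p.walk.support = l₁ ++ u :: (l₂ ++ v :: l₃)

/-- A family of pairwise vertex-disjoint paths. -/
def NodeDisjointFamily {ι : Type} {G : SimpleGraph V} (P : ι → GraphPath G) : Prop :=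
  ∀ i j, i ≠ j → Disjoint (P i).support (P j).support

/-- A family of pairwise edge-disjoint paths. -/
def EdgeDisjointFamily {ι : Type} {G : SimpleGraph V} (P : ι → GraphPath G) : Prop :=
  ∀ i j, i ≠ j → Disjoint (P i).edges (P j).edges

/-- `T` is node-well-linked in the subgraph `H` of `G`: every two disjoint (finite)
subsets `T', T''` of `T` are joined by `min |T'| |T''|` node-disjoint paths inside `H`. -/
def NodeWellLinkedIn (G : SimpleGraph V) (H : G.Subgraph) (T : Set V) : Prop :=
  ∀ T' T'' : Set V, T' ⊆ T → T'' ⊆ T → Disjoint T' T'' → T'.Finite → T''.Finite →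
    ∃ P : Fin (min T'.ncard T''.ncard) → GraphPath G,
      (∀ j, (P j).InSubgraph H) ∧ NodeDisjointFamily P ∧
        ∀ j, (P j).first ∈ T' ∧ (P j).last ∈ T''

/-- `(A, B)` are node-linked in the subgraph `H` of `G`. -/
def NodeLinkedIn (G : SimpleGraph V) (H : G.Subgraph) (A B : Set V) : Prop :=
  ∀ A' B' : Set V, A' ⊆ A → B' ⊆ B → A'.Finite → B'.Finite →
    ∃ P : Fin (min A'.ncard B'.ncard) → GraphPath G,
      (∀ j, (P j).InSubgraph H) ∧ NodeDisjointFamily P ∧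
        ∀ j, (P j).first ∈ A' ∧ (P j).last ∈ B'

/-- `T` is edge-well-linked in the subgraph `H` of `G`. -/
def EdgeWellLinkedIn (G : SimpleGraph V) (H : G.Subgraph) (T : Set V) : Prop :=
  ∀ T' T'' : Set V, T' ⊆ T → T'' ⊆ T → Disjoint T' T'' → T'.Finite → T''.Finite →
    ∃ P : Fin (min T'.ncard T''.ncard) → GraphPath G,
      (∀ j, (P j).InSubgraph H) ∧ EdgeDisjointFamily P ∧
        ∀ j, (P j).first ∈ T' ∧ (P j).last ∈ T''

/-- `T` is `w`-weakly well-linked in the subgraph `H` of `G`: every two disjoint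
subsets `T', T''` of `T` are joined by `min (min |T'| |T''|) w` edge-disjoint paths. -/
def WeaklyWellLinkedIn (G : SimpleGraph V) (H : G.Subgraph) (T : Set V) (w : ℕ) : Prop :=
  ∀ T' T'' : Set V, T' ⊆ T → T'' ⊆ T → Disjoint T' T'' → T'.Finite → T''.Finite →
    ∃ P : Fin (min (min T'.ncard T''.ncard) w) → GraphPath G,
      (∀ j, (P j).InSubgraph H) ∧ EdgeDisjointFamily P ∧
        ∀ j, (P j).first ∈ T' ∧ (P j).last ∈ T''

/-- The maximum vertex degree of `G` is at most `d`. -/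
def MaxDegreeLE (G : SimpleGraph V) (d : ℕ) : Prop :=
  ∀ v, (G.neighborSet v).ncard ≤ d

/-- The set of edges of `G` with one endpoint in `X` and the other in `Y`. -/
def crossEdges (G : SimpleGraph V) (X Y : Set V) : Set (Sym2 V) :=
  {e | e ∈ G.edgeSet ∧ ∃ x ∈ X, ∃ y ∈ Y, e = s(x, y)}

end BasicDefs

/-- Casting an index of a link set of a Path-of-Sets System to the index
of the cluster on its left. -/
def posIdx {ℓ : ℕ} (i : Fin (ℓ - 1)) : Fin ℓ :=
  ⟨i.val, by have := i.isLt; omega⟩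

/-- Casting an index of a link set of a Path-of-Sets System to the index
of the cluster on its right. -/
def posIdxSucc {ℓ : ℕ} (i : Fin (ℓ - 1)) : Fin ℓ :=
  ⟨i.val + 1, by have := i.isLt; omega⟩

/-- The index of the `i`-th odd-indexed cluster. -/
def oddIdx {ℓ : ℕ} (i : Fin ((ℓ + 1) / 2)) : Fin ℓ :=
  ⟨2 * i.val, by have := i.isLt; omega⟩

/-- A Path-of-Sets System of length `ℓ` and width `w` in the graph `G`. -/
structure PathOfSets {V : Type} (G : SimpleGraph V) (ℓ w : ℕ) where
  C : Fin ℓ → G.Subgraph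
  A : Fin ℓ → Set V
  B : Fin ℓ → Set V
  P : Fin (ℓ - 1) → Fin w → GraphPath G
  C_connected : ∀ i, (C i).Connected
  C_disjoint : ∀ i j, i ≠ j → Disjoint (C i).verts (C j).verts
  A_sub : ∀ i, A i ⊆ (C i).verts
  B_sub : ∀ i, B i ⊆ (C i).verts
  AB_disjoint : ∀ i, Disjoint (A i) (B i)
  A_card : ∀ i, (A i).ncard = w
  B_card : ∀ i, (B i).ncard = w
  P_first : ∀ i j, (P i j).first ∈ B (posIdx i)
  P_last : ∀ i j, (P i j).last ∈ A (posIdxSucc i)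
  P_disjoint : ∀ i j i' j', (i, j) ≠ (i', j') →
    Disjoint (P i j).support (P i' j').support
  P_internal : ∀ i j (k : Fin ℓ) v, v ∈ (P i j).support → v ∈ (C k).verts →
    v = (P i j).first ∨ v = (P i j).last

/-- A strong Path-of-Sets System. -/
def PathOfSets.Strong {V : Type} {G : SimpleGraph V} {ℓ w : ℕ}
    (PoS : PathOfSets G ℓ w) : Prop :=
  ∀ i, NodeWellLinkedIn G (PoS.C i) (PoS.A i) ∧ NodeWellLinkedIn G (PoS.C i) (PoS.B i) ∧
    NodeLinkedIn G (PoS.C i) (PoS.A i) (PoS.B i)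

/-- A weak Path-of-Sets System. -/
def PathOfSets.Weak {V : Type} {G : SimpleGraph V} {ℓ w : ℕ}
    (PoS : PathOfSets G ℓ w) : Prop :=
  ∀ i, EdgeWellLinkedIn G (PoS.C i) (PoS.A i ∪ PoS.B i)

/-- A hairy Path-of-Sets System of length `ℓ` and width `w`. -/
structure HairyPathOfSets {V : Type} (G : SimpleGraph V) (ℓ w : ℕ) where
  pos : PathOfSets G ℓ w
  strong : pos.Strong
  S : Fin ℓ → G.Subgraph
  S_connected : ∀ i, (S i).Connected
  S_disjoint : ∀ i j, i ≠ j → Disjoint (S i).verts (S j).verts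
  S_C_disjoint : ∀ i j, Disjoint (S i).verts (pos.C j).verts
  S_P_disjoint : ∀ i j k, Disjoint (S i).verts (pos.P j k).support
  Y : Fin ℓ → Set V
  Y_sub : ∀ i, Y i ⊆ (S i).verts
  Y_card : ∀ i, (Y i).ncard = w
  Y_wl : ∀ i, NodeWellLinkedIn G (S i) (Y i)
  X : Fin ℓ → Set V
  X_sub : ∀ i, X i ⊆ (pos.C i).verts
  X_card : ∀ i, (X i).ncard = w
  X_AB : ∀ i, X i ∩ (pos.A i ∪ pos.B i) = ∅
  X_linked : ∀ i, NodeLinkedIn G (pos.C i) (pos.A i) (X i)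
  Q : Fin ℓ → Fin w → GraphPath G
  Q_first : ∀ i j, (Q i j).first ∈ X i
  Q_last : ∀ i j, (Q i j).last ∈ Y i
  Q_disjoint : ∀ i j i' j', (i, j) ≠ (i', j') →
    Disjoint (Q i j).support (Q i' j').support
  Q_P_disjoint : ∀ i j i' j', Disjoint (Q i j).support (pos.P i' j').support
  Q_internal : ∀ i j (k : Fin ℓ) v, v ∈ (Q i j).support →
    (v ∈ (S k).verts ∨ v ∈ (pos.C k).verts) →
    v = (Q i j).first ∨ v = (Q i j).last

/-- An `(A, B, X)`-crossbar of width `ρ` inside the subgraph `H` of `G`. -/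
structure CrossbarIn {V : Type} (G : SimpleGraph V) (H : G.Subgraph)
    (A B X : Set V) (ρ : ℕ) where
  P : Fin ρ → GraphPath G
  Q : Fin ρ → GraphPath G
  P_in : ∀ i, (P i).InSubgraph H
  Q_in : ∀ i, (Q i).InSubgraph H
  P_first : ∀ i, (P i).first ∈ A
  P_last : ∀ i, (P i).last ∈ B
  P_disjoint : ∀ i j, i ≠ j → Disjoint (P i).support (P j).support
  Q_disjoint : ∀ i j, i ≠ j → Disjoint (Q i).support (Q j).support
  Q_last : ∀ i, (Q i).last ∈ X
  cross_disjoint : ∀ i j, i ≠ j → Disjoint (P i).support (Q j).support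
  touch : ∀ i, (P i).support ∩ (Q i).support = {(Q i).first}

/-- A model of the graph `H` as a minor of the graph `G`: every vertex of `H` is
mapped to a connected subgraph of `G`, the images being pairwise disjoint, and every
edge of `H` is mapped to a path of `G` connecting the images of its endpoints, the
paths being pairwise internally disjoint and internally disjoint from all the
vertex images. -/
structure MinorModel {V W : Type} (G : SimpleGraph V) (H : SimpleGraph W) where
  vmap : W → G.Subgraph
  vmap_connected : ∀ u, (vmap u).Connected
  vmap_disjoint : ∀ u u', u ≠ u' → Disjoint (vmap u).verts (vmap u').verts
  emap : ∀ ⦃u v : W⦄, H.Adj u v → GraphPath G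
  emap_first : ∀ ⦃u v : W⦄ (h : H.Adj u v), (emap h).first ∈ (vmap u).verts
  emap_last : ∀ ⦃u v : W⦄ (h : H.Adj u v), (emap h).last ∈ (vmap v).verts
  emap_internal : ∀ ⦃u v : W⦄ (h : H.Adj u v) (x : V) (u'' : W),
    x ∈ (emap h).support → x ∈ (vmap u'').verts →
    x = (emap h).first ∨ x = (emap h).last
  emap_disjoint : ∀ ⦃u v u' v' : W⦄ (h : H.Adj u v) (h' : H.Adj u' v'),
    s(u, v) ≠ s(u', v') → ∀ x, x ∈ (emap h).support → x ∈ (emap h').support →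
      (x = (emap h).first ∨ x = (emap h).last) ∧
      (x = (emap h').first ∨ x = (emap h').last)

/-- The `(g × g)`-grid graph. -/
def gridGraph (g : ℕ) : SimpleGraph (Fin g × Fin g) :=
  SimpleGraph.fromRel fun a b =>
    (a.1 = b.1 ∧ a.2.val + 1 = b.2.val) ∨ (a.2 = b.2 ∧ a.1.val + 1 = b.1.val)

/-- A tree-decomposition of the graph `G`. -/
structure TreeDecomp {V : Type} (G : SimpleGraph V) where
  ι : Type
  tree : SimpleGraph ι
  tree_isTree : tree.IsTree
  bag : ι → Set V
  bag_vertex : ∀ v : V, ∃ i, v ∈ bag i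
  bag_edge : ∀ ⦃u v : V⦄, G.Adj u v → ∃ i, u ∈ bag i ∧ v ∈ bag i
  bag_subtree : ∀ v : V, (tree.induce {i | v ∈ bag i}).Connected

/-- The treewidth of `G` is at least `k`: every tree-decomposition has a bag of
cardinality at least `k + 1`. -/
def HasTreewidthAtLeast {V : Type} (G : SimpleGraph V) (k : ℕ) : Prop :=
  ∀ D : TreeDecomp G, ∃ i, k + 1 ≤ (D.bag i).ncard

/-- A multigraph on the vertex type `ν`, with an abstract finite edge type
and no loops. -/
structure MultigraphOn (ν : Type) where
  E : Type
  E_finite : Finite E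
  ends : E → ν × ν
  no_loops : ∀ e, (ends e).1 ≠ (ends e).2

/-- The degree of a vertex in a multigraph. -/
noncomputable def MultigraphOn.degree {ν : Type} (M : MultigraphOn ν) (v : ν) : ℕ :=
  {e : M.E | (M.ends e).1 = v ∨ (M.ends e).2 = v}.ncard

/-- The set of edges of a multigraph with exactly one endpoint in `S`. -/
def MultigraphOn.crossing {ν : Type} (M : MultigraphOn ν) (S : Set ν) : Set M.E :=
  {e | ((M.ends e).1 ∈ S ∧ (M.ends e).2 ∉ S) ∨ ((M.ends e).1 ∉ S ∧ (M.ends e).2 ∈ S)}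

/-- A multigraph is a `1/2`-expander: every `S` with `|S| ≤ |V|/2` has at least
`|S|/2` edges leaving it. -/
def MultigraphOn.IsHalfExpander {ν : Type} (M : MultigraphOn ν) : Prop :=
  ∀ S : Set ν, 2 * S.ncard ≤ Nat.card ν → S.ncard ≤ 2 * (M.crossing S).ncard

/-- A model of the multigraph `M` as a minor of the graph `G`. -/
structure MultiMinorModel {V ν : Type} (G : SimpleGraph V) (M : MultigraphOn ν) where
  vmap : ν → G.Subgraph
  vmap_connected : ∀ u, (vmap u).Connected
  vmap_disjoint : ∀ u u', u ≠ u' → Disjoint (vmap u).verts (vmap u').verts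
  emap : M.E → GraphPath G
  emap_first : ∀ e, (emap e).first ∈ (vmap (M.ends e).1).verts
  emap_last : ∀ e, (emap e).last ∈ (vmap (M.ends e).2).verts
  emap_internal : ∀ e (x : V) (u : ν), x ∈ (emap e).support → x ∈ (vmap u).verts →
    x = (emap e).first ∨ x = (emap e).last
  emap_disjoint : ∀ e e', e ≠ e' → ∀ x, x ∈ (emap e).support → x ∈ (emap e').support →
      (x = (emap e).first ∨ x = (emap e).last) ∧
      (x = (emap e').first ∨ x = (emap e').last)

section PathSets

variable {V : Type} {G : SimpleGraph V}

/-- `(Rh, Qh)` is a `(w, D)`-intersecting pair of path sets. -/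
def IntersectingPair (Rh Qh : Set (GraphPath G)) (w D : ℕ) : Prop :=
  (∀ r ∈ Rh, w ≤ {q ∈ Qh | ¬ Disjoint r.support q.support}.ncard) ∧
  (∀ q ∈ Qh, D ≤ {r ∈ Rh | ¬ Disjoint r.support q.support}.ncard)

/-- The paths of `Sig` entirely contained in the subgraph `C`. -/
def pathsIn (Sig : Set (GraphPath G)) (C : G.Subgraph) : Set (GraphPath G) :=
  {σ ∈ Sig | σ.InSubgraph C}

/-- The endpoints of the paths of `Sig` entirely contained in the subgraph `C`. -/
def pathEndpoints (Sig : Set (GraphPath G)) (C : G.Subgraph) : Set V :=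
  {v | ∃ σ ∈ pathsIn Sig C, v = σ.first ∨ v = σ.last}

/-- `R` is an `(A, B)`-linkage: a set of pairwise node-disjoint paths connecting
every vertex of `A` to a distinct vertex of `B`. -/
def IsLinkage (A B : Set V) (R : Set (GraphPath G)) : Prop :=
  (R.Pairwise fun p q => Disjoint p.support q.support) ∧
  (∀ p ∈ R, p.first ∈ A ∧ p.last ∈ B) ∧
  (∀ a ∈ A, ∃ p ∈ R, p.first = a) ∧
  (∀ b ∈ B, ∃ p ∈ R, p.last = b)

/-- `G` has the perfect unique linkage property with respect to `(A, B)`, with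
unique linkage `R`: `R` is the unique `(A, B)`-linkage and every vertex of `G`
lies on a path of `R`. -/
def PerfectUniqueLinkage (A B : Set V) (R : Set (GraphPath G)) : Prop :=
  IsLinkage A B R ∧ (∀ R' : Set (GraphPath G), IsLinkage A B R' → R' = R) ∧
  (∀ v : V, ∃ p ∈ R, v ∈ p.support)

/-- An `M`-slicing of the set `Rh` of paths: for each path of `Rh`, a sequence of
`M + 1` vertices appearing on it in order, starting at its first vertex and ending
at its last vertex. -/
structure Slicing (Rh : Set (GraphPath G)) (M : ℕ) where
  seq : GraphPath G → Fin (M + 1) → V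
  first_eq : ∀ p ∈ Rh, seq p 0 = p.first
  last_eq : ∀ p ∈ Rh, seq p (Fin.last M) = p.last
  mem : ∀ p ∈ Rh, ∀ i, seq p i ∈ p.support
  ordered : ∀ p ∈ Rh, ∀ i j : Fin (M + 1), i < j →
    seq p i = seq p j ∨ beforeOn p (seq p i) (seq p j)

/-- `x` lies strictly inside the `i`-th segment of the path `p`, with respect to the
slicing `S`. -/
def Slicing.inSegment {Rh : Set (GraphPath G)} {M : ℕ} (S : Slicing Rh M)
    (p : GraphPath G) (i : Fin M) (x : V) : Prop :=
  beforeOn p (S.seq p i.castSucc) x ∧ beforeOn p x (S.seq p i.succ)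

/-- A pair of families of `κ` node-disjoint paths: the paths of `P` connect the
vertices of `A` to vertices of `B`, the paths of `Q` connect the vertices of `A` to
vertices of `X`. -/
def ValidLinkPair (G : SimpleGraph V) (A B X : Set V) (κ : ℕ)
    (P Q : Fin κ → GraphPath G) : Prop :=
  NodeDisjointFamily P ∧ NodeDisjointFamily Q ∧
  (∀ i, (P i).first ∈ A ∧ (P i).last ∈ B) ∧
  (∀ i, (Q i).first ∈ A ∧ (Q i).last ∈ X) ∧
  (∀ a ∈ A, ∃ i, (P i).first = a) ∧
  (∀ a ∈ A, ∃ i, (Q i).first = a)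

/-- The edge set of the graph `H(P, Q)`, the union of all paths of `P` and `Q`. -/
def LinkPairEdges {κ : ℕ} (P Q : Fin κ → GraphPath G) : Set (Sym2 V) :=
  (⋃ i, (P i).edges) ∪ ⋃ i, (Q i).edges

/-- A pseudo-grid of depth `D` with respect to the path families `P`, `Q` and the
set `X`: `R i` are the (index sets of the) disjoint layers, each of at most `g ^ 2`
paths of `P`; `Q'` is a family of `⌈κ/4⌉` node-disjoint paths, each a subpath of the
`Q`-path `Q (f j)` for a distinct index `f j` outside all layers, with exactly one
endpoint in `X`, such that the paths of `Q'` avoid all `P`-paths outside the layers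
(property P1) and, for every layer, all but at most `2 g ^ 2` paths of `Q'` meet
some path of that layer (property P2). -/
def IsPseudoGrid {G : SimpleGraph V} (X : Set V) (g κ D : ℕ)
    (P Q : Fin κ → GraphPath G) (R : Fin D → Set (Fin κ))
    (Q' : Fin ((κ + 3) / 4) → GraphPath G) (f : Fin ((κ + 3) / 4) → Fin κ) : Prop :=
  (∀ i j, i ≠ j → Disjoint (R i) (R j)) ∧
  (∀ i, (R i).ncard ≤ g ^ 2) ∧
  Function.Injective f ∧
  (∀ j i, f j ∉ R i) ∧
  (∀ j, (Q' j).IsSubpathOf (Q (f j))) ∧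
  (∀ j, Xor' ((Q' j).first ∈ X) ((Q' j).last ∈ X)) ∧
  NodeDisjointFamily Q' ∧
  (∀ j k, (∀ i, k ∉ R i) → Disjoint (Q' j).support (P k).support) ∧
  (∀ i, {j | ∀ k ∈ R i, Disjoint (Q' j).support (P k).support}.ncard ≤ 2 * g ^ 2)

end PathSets

/-- The separator `S_t` associated with the numbering `μ` and the linkage `Rh`:
for each path of `Rh` it contains the first vertex whose `μ`-number (shifted to the
range `{1, …, n}`) is at least `t`, or the last vertex of the path if there is no
such vertex. -/
def sepSet {V : Type} [Fintype V] {G : SimpleGraph V} (Rh : Set (GraphPath G))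
    (μ : V ≃ Fin (Fintype.card V)) (t : ℕ) : Set V :=
  {v | ∃ p ∈ Rh, v ∈ p.support ∧
    ((t ≤ (μ v).val + 1 ∧ ∀ u, beforeOn p u v → (μ u).val + 1 < t) ∨
     (v = p.last ∧ ∀ u ∈ p.support, (μ u).val + 1 < t))}

section StitchAux

variable {V : Type} {G : SimpleGraph V}

lemma GraphPath.first_mem_support (p : GraphPath G) : p.first ∈ p.support :=
  p.walk.start_mem_support

lemma GraphPath.last_mem_support (p : GraphPath G) : p.last ∈ p.support :=
  p.walk.end_mem_support

/-- Concatenation of two graph paths meeting only at the junction vertex. -/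
def GraphPath.glue (p q : GraphPath G) (h : q.first = p.last)
    (hd : ∀ v, v ∈ p.support → v ∈ q.support → v = p.last) : GraphPath G where
  first := p.first
  last := q.last
  walk := p.walk.append (q.walk.copy h rfl)
  isPath := by
    rw [SimpleGraph.Walk.isPath_def, SimpleGraph.Walk.support_append,
      SimpleGraph.Walk.support_copy]
    refine List.Nodup.append p.isPath.support_nodup q.isPath.support_nodup.tail ?_
    intro v hvp hvq
    have hvq' : v ∈ q.walk.support := List.mem_of_mem_tail hvq
    have hv : v = p.last := hd v hvp hvq'
    have hnd : (q.first :: q.walk.support.tail).Nodup := by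
      rw [← q.walk.support_eq_cons]; exact q.isPath.support_nodup
    have hv2 : q.first = v := h.trans hv.symm
    rw [← hv2] at hvq
    exact (List.nodup_cons.mp hnd).1 hvq

@[simp] lemma GraphPath.glue_first (p q : GraphPath G) (h : q.first = p.last)
    (hd : ∀ v, v ∈ p.support → v ∈ q.support → v = p.last) :
    (p.glue q h hd).first = p.first := rfl

@[simp] lemma GraphPath.glue_last (p q : GraphPath G) (h : q.first = p.last)
    (hd : ∀ v, v ∈ p.support → v ∈ q.support → v = p.last) :
    (p.glue q h hd).last = q.last := rfl

@[simp] lemma GraphPath.glue_support (p q : GraphPath G) (h : q.first = p.last)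
    (hd : ∀ v, v ∈ p.support → v ∈ q.support → v = p.last) :
    (p.glue q h hd).support = p.support ∪ q.support := by
  ext v
  simp only [GraphPath.glue, GraphPath.support, Set.mem_setOf_eq, Set.mem_union,
    SimpleGraph.Walk.mem_support_append_iff, SimpleGraph.Walk.support_copy]

variable [Fintype V] {ℓ w : ℕ} (PoS : PathOfSets G ℓ w)

lemma PathOfSets.first_inj (e : Fin (ℓ - 1)) {k k' : Fin w}
    (h : (PoS.P e k).first = (PoS.P e k').first) : k = k' := by
  by_contra hne
  have hd := PoS.P_disjoint e k e k' (fun hp => hne (congrArg Prod.snd hp))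
  exact Set.disjoint_left.mp hd (GraphPath.first_mem_support _)
    (h ▸ GraphPath.first_mem_support (PoS.P e k'))

lemma PathOfSets.last_inj (e : Fin (ℓ - 1)) {k k' : Fin w}
    (h : (PoS.P e k).last = (PoS.P e k').last) : k = k' := by
  by_contra hne
  have hd := PoS.P_disjoint e k e k' (fun hp => hne (congrArg Prod.snd hp))
  exact Set.disjoint_left.mp hd (GraphPath.last_mem_support _)
    (h ▸ GraphPath.last_mem_support (PoS.P e k'))

lemma PathOfSets.first_surj (e : Fin (ℓ - 1)) :
    PoS.B (posIdx e) ⊆ Set.range (fun k => (PoS.P e k).first) := by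
  have hinj : Function.Injective (fun k : Fin w => (PoS.P e k).first) :=
    fun k k' h => PoS.first_inj e h
  have hsub : Set.range (fun k => (PoS.P e k).first) ⊆ PoS.B (posIdx e) := by
    rintro _ ⟨k, rfl⟩; exact PoS.P_first e k
  have hcard : (Set.range fun k => (PoS.P e k).first).ncard = w := by
    rw [← Set.image_univ, Set.ncard_image_of_injective _ hinj, Set.ncard_univ,
      Nat.card_eq_fintype_card, Fintype.card_fin]
  have heq := Set.eq_of_subset_of_ncard_le hsub
    (by rw [hcard, PoS.B_card]) (Set.toFinite _)
  exact heq.symm.subset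

lemma PathOfSets.last_surj (e : Fin (ℓ - 1)) :
    PoS.A (posIdxSucc e) ⊆ Set.range (fun k => (PoS.P e k).last) := by
  have hinj : Function.Injective (fun k : Fin w => (PoS.P e k).last) :=
    fun k k' h => PoS.last_inj e h
  have hsub : Set.range (fun k => (PoS.P e k).last) ⊆ PoS.A (posIdxSucc e) := by
    rintro _ ⟨k, rfl⟩; exact PoS.P_last e k
  have hcard : (Set.range fun k => (PoS.P e k).last).ncard = w := by
    rw [← Set.image_univ, Set.ncard_image_of_injective _ hinj, Set.ncard_univ,
      Nat.card_eq_fintype_card, Fintype.card_fin]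
  have heq := Set.eq_of_subset_of_ncard_le hsub
    (by rw [hcard, PoS.A_card]) (Set.toFinite _)
  exact heq.symm.subset

/-- A path of a Path-of-Sets System avoids every cluster other than the two clusters
containing its endpoints. -/
lemma PathOfSets.not_in_cluster (e : Fin (ℓ - 1)) (k : Fin w) (c : Fin ℓ)
    (h1 : c.val ≠ e.val) (h2 : c.val ≠ e.val + 1) {v : V}
    (hv : v ∈ (PoS.P e k).support) (hc : v ∈ (PoS.C c).verts) : False := by
  rcases PoS.P_internal e k c v hv hc with h | h
  · have hcc : c ≠ posIdx e := fun hh => h1 (congrArg Fin.val hh)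
    exact Set.disjoint_left.mp (PoS.C_disjoint c (posIdx e) hcc) hc
      (PoS.B_sub _ (h ▸ PoS.P_first e k))
  · have hcc : c ≠ posIdxSucc e := fun hh => h2 (congrArg Fin.val hh)
    exact Set.disjoint_left.mp (PoS.C_disjoint c (posIdxSucc e) hcc) hc
      (PoS.A_sub _ (h ▸ PoS.P_last e k))

end StitchAux

/-- Claim 2.5, stitching a Path-of-Sets System: given a strong
Path-of-Sets System of length `ℓ` and width `w`, and subsets `A'_{2i-1} ⊆ A_{2i-1}`,
`B'_{2i-1} ⊆ B_{2i-1}` of cardinality `w'` each, there is a Path-of-Sets System of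
length `⌈ℓ/2⌉` and width `w'` whose clusters are the odd-indexed clusters and whose
nails are the chosen subsets; moreover, it is strong whenever each `A'_{2i-1}` and
`B'_{2i-1}` is node-well-linked and `(A'_{2i-1}, B'_{2i-1})` are node-linked in
`C_{2i-1}`. -/
theorem stitching_claim {V : Type} [Fintype V] (G : SimpleGraph V)
    (ℓ w w' : ℕ) (hℓ : 1 ≤ ℓ) (hw : 1 ≤ w)
    (PoS : PathOfSets G ℓ w) (hstrong : PoS.Strong)
    (A' B' : Fin ((ℓ + 1) / 2) → Set V)
    (hA'sub : ∀ i, A' i ⊆ PoS.A (oddIdx i))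
    (hB'sub : ∀ i, B' i ⊆ PoS.B (oddIdx i))
    (hA'card : ∀ i, (A' i).ncard = w')
    (hB'card : ∀ i, (B' i).ncard = w') :
    ∃ Q : PathOfSets G ((ℓ + 1) / 2) w',
      (∀ i, Q.C i = PoS.C (oddIdx i)) ∧
      (∀ i, Q.A i = A' i) ∧
      (∀ i, Q.B i = B' i) ∧
      ((∀ i, NodeWellLinkedIn G (PoS.C (oddIdx i)) (A' i) ∧
              NodeWellLinkedIn G (PoS.C (oddIdx i)) (B' i) ∧
              NodeLinkedIn G (PoS.C (oddIdx i)) (A' i) (B' i)) →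
        Q.Strong) := by
  classical
  have hPP : ∀ (e e' : Fin (ℓ - 1)) (k k' : Fin w), e ≠ e' → ∀ v : V,
      v ∈ (PoS.P e k).support → v ∈ (PoS.P e' k').support → False :=
    fun e e' k k' hne v hv hv' =>
      Set.disjoint_left.mp
        (PoS.P_disjoint e k e' k' (fun h => hne (congrArg Prod.fst h))) hv hv'
  have hCdisj : ∀ c c' : Fin ℓ, c ≠ c' → ∀ v, v ∈ (PoS.C c).verts →
      v ∈ (PoS.C c').verts → False :=
    fun c c' h v hv hv' => Set.disjoint_left.mp (PoS.C_disjoint c c' h) hv hv'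
  have key : ∀ i : Fin ((ℓ + 1) / 2 - 1), ∃ p : Fin w' → GraphPath G,
      (∀ j, (p j).first ∈ B' (posIdx i)) ∧
      (∀ j, (p j).last ∈ A' (posIdxSucc i)) ∧
      (∀ j j', j ≠ j' → Disjoint (p j).support (p j').support) ∧
      (∀ j v, v ∈ (p j).support →
        (∃ e : Fin (ℓ - 1), (e.val = 2 * i.val ∨ e.val = 2 * i.val + 1) ∧
          ∃ k, v ∈ (PoS.P e k).support) ∨
        (∃ c : Fin ℓ, c.val = 2 * i.val + 1 ∧ v ∈ (PoS.C c).verts)) ∧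
      (∀ j (c : Fin ℓ) v, v ∈ (p j).support → v ∈ (PoS.C c).verts →
        c.val ≠ 2 * i.val + 1 → v = (p j).first ∨ v = (p j).last) := by
    intro i
    have hi := i.isLt
    obtain ⟨e₁, hv₁⟩ : ∃ e : Fin (ℓ - 1), e.val = 2 * i.val :=
      ⟨⟨2 * i.val, by omega⟩, rfl⟩
    obtain ⟨e₂, hv₂⟩ : ∃ e : Fin (ℓ - 1), e.val = 2 * i.val + 1 :=
      ⟨⟨2 * i.val + 1, by omega⟩, rfl⟩
    obtain ⟨m, hvm⟩ : ∃ c : Fin ℓ, c.val = 2 * i.val + 1 :=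
      ⟨⟨2 * i.val + 1, by omega⟩, rfl⟩
    have r₁ : (posIdx e₁).val = e₁.val := rfl
    have r₂ : (posIdxSucc e₁).val = e₁.val + 1 := rfl
    have r₃ : (posIdx e₂).val = e₂.val := rfl
    have r₄ : (posIdxSucc e₂).val = e₂.val + 1 := rfl
    have hpe₁ : posIdx e₁ = oddIdx (posIdx i) := Fin.ext hv₁
    have hpse₁ : posIdxSucc e₁ = m := Fin.ext (by omega)
    have hpe₂ : posIdx e₂ = m := Fin.ext (by omega)
    have hpse₂ : posIdxSucc e₂ = oddIdx (posIdxSucc i) :=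
      Fin.ext (show e₂.val + 1 = 2 * (i.val + 1) by omega)
    have hne₁₂ : e₁ ≠ e₂ := fun h => by
      have := congrArg Fin.val h; omega
    have hB'B : B' (posIdx i) ⊆ PoS.B (posIdx e₁) := by
      rw [hpe₁]; exact hB'sub (posIdx i)
    have hA'A : A' (posIdxSucc i) ⊆ PoS.A (posIdxSucc e₂) := by
      rw [hpse₂]; exact hA'sub (posIdxSucc i)
    set T₁ : Set V :=
      (fun k => (PoS.P e₁ k).last) ''
        ((fun k => (PoS.P e₁ k).first) ⁻¹' (B' (posIdx i))) with hT₁def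
    set T₂ : Set V :=
      (fun k => (PoS.P e₂ k).first) ''
        ((fun k => (PoS.P e₂ k).last) ⁻¹' (A' (posIdxSucc i))) with hT₂def
    have hT₁A : T₁ ⊆ PoS.A m := by
      rintro _ ⟨k, hk, rfl⟩; rw [← hpse₁]; exact PoS.P_last e₁ k
    have hT₂B : T₂ ⊆ PoS.B m := by
      rintro _ ⟨k, hk, rfl⟩; rw [← hpe₂]; exact PoS.P_first e₂ k
    have hT₁card : T₁.ncard = w' := by
      rw [hT₁def, Set.ncard_image_of_injective _ (fun k k' h => PoS.last_inj e₁ h),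
        Set.ncard_preimage_of_injective_subset_range (fun k k' h => PoS.first_inj e₁ h)
          (hB'B.trans (PoS.first_surj e₁))]
      exact hB'card (posIdx i)
    have hT₂card : T₂.ncard = w' := by
      rw [hT₂def, Set.ncard_image_of_injective _ (fun k k' h => PoS.first_inj e₂ h),
        Set.ncard_preimage_of_injective_subset_range (fun k k' h => PoS.last_inj e₂ h)
          (hA'A.trans (PoS.last_surj e₂))]
      exact hA'card (posIdxSucc i)
    obtain ⟨M0, hMin, hMdisj, hMends⟩ :=
      (hstrong m).2.2 T₁ T₂ hT₁A hT₂B (Set.toFinite _) (Set.toFinite _)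
    have hmin : min T₁.ncard T₂.ncard = w' := by rw [hT₁card, hT₂card, min_self]
    set M : Fin w' → GraphPath G := fun j => M0 (Fin.cast hmin.symm j) with hMdef
    have hMsub : ∀ j, (M j).support ⊆ (PoS.C m).verts := fun j => (hMin _).1
    have hMd : ∀ j j', j ≠ j' → ∀ v, v ∈ (M j).support → v ∈ (M j').support → False := by
      intro j j' h v hv hv'
      exact Set.disjoint_left.mp
        (hMdisj _ _ (fun hc => h (Fin.cast_injective _ hc))) hv hv'
    have hMfT : ∀ j, (M j).first ∈ T₁ := fun j => (hMends _).1
    have hMlT : ∀ j, (M j).last ∈ T₂ := fun j => (hMends _).2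
    have h1 : ∀ j : Fin w', ∃ k : Fin w, (PoS.P e₁ k).first ∈ B' (posIdx i) ∧
        (PoS.P e₁ k).last = (M j).first := by
      intro j; obtain ⟨k, hk, hEq⟩ := hMfT j; exact ⟨k, hk, hEq⟩
    choose k₁ hk₁B hk₁last using h1
    have h2 : ∀ j : Fin w', ∃ k : Fin w, (PoS.P e₂ k).last ∈ A' (posIdxSucc i) ∧
        (PoS.P e₂ k).first = (M j).last := by
      intro j; obtain ⟨k, hk, hEq⟩ := hMlT j; exact ⟨k, hk, hEq⟩
    choose k₂ hk₂A hk₂first using h2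
    have hS1M : ∀ j j' v, v ∈ (PoS.P e₁ (k₁ j)).support → v ∈ (M j').support →
        v = (PoS.P e₁ (k₁ j)).last ∧ j = j' := by
      intro j j' v hv hv'
      have hvC : v ∈ (PoS.C m).verts := hMsub j' hv'
      have hvlast : v = (PoS.P e₁ (k₁ j)).last := by
        rcases PoS.P_internal e₁ (k₁ j) m v hv hvC with h | h
        · exfalso
          have hvB : v ∈ (PoS.C (posIdx e₁)).verts := by
            rw [h]; exact PoS.B_sub _ (PoS.P_first e₁ (k₁ j))
          exact hCdisj (posIdx e₁) m
            (fun hh => by have := congrArg Fin.val hh; omega) v hvB hvC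
        · exact h
      refine ⟨hvlast, ?_⟩
      by_contra hne
      exact hMd j j' hne (M j).first (M j).first_mem_support
        (by rw [← hk₁last j, ← hvlast]; exact hv')
    have hS2M : ∀ j j' v, v ∈ (PoS.P e₂ (k₂ j)).support → v ∈ (M j').support →
        v = (PoS.P e₂ (k₂ j)).first ∧ j = j' := by
      intro j j' v hv hv'
      have hvC : v ∈ (PoS.C m).verts := hMsub j' hv'
      have hvfirst : v = (PoS.P e₂ (k₂ j)).first := by
        rcases PoS.P_internal e₂ (k₂ j) m v hv hvC with h | h
        · exact h
        · exfalso
          have hvA : v ∈ (PoS.C (posIdxSucc e₂)).verts := by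
            rw [h]; exact PoS.A_sub _ (PoS.P_last e₂ (k₂ j))
          exact hCdisj (posIdxSucc e₂) m
            (fun hh => by have := congrArg Fin.val hh; omega) v hvA hvC
      refine ⟨hvfirst, ?_⟩
      by_contra hne
      exact hMd j j' hne (M j).last (M j).last_mem_support
        (by rw [← hk₂first j, ← hvfirst]; exact hv')
    have hS1S2 : ∀ j j' v, v ∈ (PoS.P e₁ (k₁ j)).support →
        v ∈ (PoS.P e₂ (k₂ j')).support → False :=
      fun j j' v hv hv' => hPP e₁ e₂ (k₁ j) (k₂ j') hne₁₂ v hv hv'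
    have hd1 : ∀ j, ∀ v, v ∈ (PoS.P e₁ (k₁ j)).support → v ∈ (M j).support →
        v = (PoS.P e₁ (k₁ j)).last :=
      fun j v hv hv' => (hS1M j j v hv hv').1
    refine ⟨fun j =>
      GraphPath.glue
        (GraphPath.glue (PoS.P e₁ (k₁ j)) (M j) (hk₁last j).symm (hd1 j))
        (PoS.P e₂ (k₂ j)) (hk₂first j)
        (fun v hv hv' => by
          rw [GraphPath.glue_support] at hv
          simp only [Set.mem_union] at hv
          rcases hv with hv | hv
          · exact (hS1S2 j j v hv hv').elim
          · show v = (M j).last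
            exact ((hS2M j j v hv' hv).1).trans (hk₂first j)),
      ?_, ?_, ?_, ?_, ?_⟩
    · intro j; exact hk₁B j
    · intro j; exact hk₂A j
    · intro j j' hne
      rw [Set.disjoint_left]
      intro v hv hv'
      replace hv := (GraphPath.glue_support (p := (PoS.P e₁ (k₁ j)).glue (M j) (hk₁last j).symm (hd1 j)) _ (hk₂first j) _).subset hv
      replace hv' := (GraphPath.glue_support (p := (PoS.P e₁ (k₁ j')).glue (M j') (hk₁last j').symm (hd1 j')) _ (hk₂first j') _).subset hv'
      simp only [GraphPath.glue_support, Set.mem_union] at hv hv'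
      rcases hv with (hv | hv) | hv <;> rcases hv' with (hv' | hv') | hv'
      · by_cases hk : k₁ j = k₁ j'
        · exact hMd j j' hne (M j).first (M j).first_mem_support
            (by rw [← hk₁last j, hk, hk₁last j']; exact (M j').first_mem_support)
        · exact Set.disjoint_left.mp (PoS.P_disjoint e₁ (k₁ j) e₁ (k₁ j')
            (fun h => hk (congrArg Prod.snd h))) hv hv'
      · exact hne (hS1M j j' v hv hv').2
      · exact hS1S2 j j' v hv hv'
      · exact hne ((hS1M j' j v hv' hv).2).symm
      · exact hMd j j' hne v hv hv'
      · exact hne ((hS2M j' j v hv' hv).2).symm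
      · exact hS1S2 j' j v hv' hv
      · exact hne (hS2M j j' v hv hv').2
      · by_cases hk : k₂ j = k₂ j'
        · exact hMd j j' hne (M j).last (M j).last_mem_support
            (by rw [← hk₂first j, hk, hk₂first j']; exact (M j').last_mem_support)
        · exact Set.disjoint_left.mp (PoS.P_disjoint e₂ (k₂ j) e₂ (k₂ j')
            (fun h => hk (congrArg Prod.snd h))) hv hv'
    · intro j v hv
      replace hv := (GraphPath.glue_support (p := (PoS.P e₁ (k₁ j)).glue (M j) (hk₁last j).symm (hd1 j)) _ (hk₂first j) _).subset hv
      simp only [GraphPath.glue_support, Set.mem_union] at hv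
      rcases hv with (hv | hv) | hv
      · exact Or.inl ⟨e₁, Or.inl hv₁, k₁ j, hv⟩
      · exact Or.inr ⟨m, hvm, hMsub j hv⟩
      · exact Or.inl ⟨e₂, Or.inr hv₂, k₂ j, hv⟩
    · intro j c v hv hc hcv
      replace hv := (GraphPath.glue_support (p := (PoS.P e₁ (k₁ j)).glue (M j) (hk₁last j).symm (hd1 j)) _ (hk₂first j) _).subset hv
      simp only [GraphPath.glue_support, Set.mem_union] at hv
      rcases hv with (hv | hv) | hv
      · rcases PoS.P_internal e₁ (k₁ j) c v hv hc with h | h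
        · exact Or.inl h
        · exfalso
          have hvm' : v ∈ (PoS.C m).verts := by
            rw [h, ← hpse₁]; exact PoS.A_sub _ (PoS.P_last e₁ (k₁ j))
          exact hCdisj c m (fun hh => by have := congrArg Fin.val hh; omega) v hc hvm'
      · exact absurd (hMsub j hv)
          (fun hvm' => hCdisj c m
            (fun hh => by have := congrArg Fin.val hh; omega) v hc hvm')
      · rcases PoS.P_internal e₂ (k₂ j) c v hv hc with h | h
        · exfalso
          have hvm' : v ∈ (PoS.C m).verts := by
            rw [h, ← hpe₂]; exact PoS.B_sub _ (PoS.P_first e₂ (k₂ j))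
          exact hCdisj c m (fun hh => by have := congrArg Fin.val hh; omega) v hc hvm'
        · exact Or.inr h
  choose p hp1 hp2 hp3 hp4 hp5 using key
  refine ⟨{ C := fun i => PoS.C (oddIdx i)
            A := A'
            B := B'
            P := p
            C_connected := fun i => PoS.C_connected _
            C_disjoint := fun a b hab => PoS.C_disjoint _ _ (fun h => hab (Fin.ext (by
              have h2 : 2 * a.val = 2 * b.val := congrArg Fin.val h
              omega)))
            A_sub := fun i => (hA'sub i).trans (PoS.A_sub _)
            B_sub := fun i => (hB'sub i).trans (PoS.B_sub _)
            AB_disjoint := fun i =>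
              Disjoint.mono (hA'sub i) (hB'sub i) (PoS.AB_disjoint (oddIdx i))
            A_card := hA'card
            B_card := hB'card
            P_first := fun i j => hp1 i j
            P_last := fun i j => hp2 i j
            P_disjoint := ?_
            P_internal := ?_ }, fun i => rfl, fun i => rfl, fun i => rfl,
      fun h i => h i⟩
  · intro a j b j' hne
    by_cases hab : a = b
    · subst hab
      exact hp3 a j j' (fun h => hne (by rw [h]))
    · have hval : a.val ≠ b.val := fun h => hab (Fin.ext h)
      rw [Set.disjoint_left]
      intro v hv hv'
      rcases hp4 a j v hv with ⟨e, he, k, hk⟩ | ⟨c, hc, hvc⟩ <;>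
        rcases hp4 b j' v hv' with ⟨e', he', k', hk'⟩ | ⟨c', hc', hvc'⟩
      · refine hPP e e' k k' (fun h => ?_) v hk hk'
        have := congrArg Fin.val h
        rcases he with he | he <;> rcases he' with he' | he' <;> omega
      · refine PoS.not_in_cluster e k c' ?_ ?_ hk hvc' <;>
          (rcases he with he | he <;> omega)
      · refine PoS.not_in_cluster e' k' c ?_ ?_ hk' hvc <;>
          (rcases he' with he' | he' <;> omega)
      · exact Set.disjoint_left.mp (PoS.C_disjoint c c'
          (fun h => by have := congrArg Fin.val h; omega)) hvc hvc'
  · intro a j c v hv hvc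
    exact hp5 a j (oddIdx c) v hv hvc (show 2 * c.val ≠ 2 * a.val + 1 by omega)
end

section
/- Let H be a graph, A, B, X three disjoint vertex sets of H each of cardinality κ (for integers κ, g ≥ 2) such that every vertex of X has degree 1 in H. Let P be a set of κ node-disjoint paths connecting every vertex of A to a distinct vertex of B, and Q a set of κ node-disjoint paths connecting every vertex of A to a distinct vertex of X; no path of P contains a vertex of X, and every path of Q contains exactly one vertex of X, which serves as its endpoint. Let D be any integer with 1 ≤ D ≤ κ/(2g^2). Then either H contains an (A,B,X)-crossbar of width g^2, or H contains a pseudo-grid of depth D (with respect to P, Q). -/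
open SimpleGraph

section Helpers
variable {V : Type} {G : SimpleGraph V}

lemma exists_last_hit {S : Set V} : ∀ (L : List V), (∃ x ∈ L, x ∈ S) →
    ∃ (v : V) (l₁ l₂ : List V), L = l₁ ++ v :: l₂ ∧ v ∈ S ∧ ∀ x ∈ l₂, x ∉ S := by
  intro L
  induction L with
  | nil => rintro ⟨x, hx, -⟩; simp at hx
  | cons a L ih =>
    intro h
    by_cases h' : ∃ x ∈ L, x ∈ S
    · obtain ⟨v, l₁, l₂, h1, h2, h3⟩ := ih h'
      exact ⟨v, a :: l₁, l₂, by rw [h1]; rfl, h2, h3⟩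
    · have ha : a ∈ S := by
        obtain ⟨x, hx, hxS⟩ := h
        rcases List.mem_cons.mp hx with rfl | hx
        · exact hxS
        · exact absurd ⟨x, hx, hxS⟩ h'
      exact ⟨a, [], L, rfl, ha, fun x hx hxS => h' ⟨x, hx, hxS⟩⟩

lemma nodup_split_unique {x : V} : ∀ {a c b d : List V}, (a ++ x :: b).Nodup →
    a ++ x :: b = c ++ x :: d → a = c ∧ b = d := by
  intro a
  induction a with
  | nil =>
    intro c b d hn h
    cases c with
    | nil => simpa using h
    | cons y c =>
      simp only [List.nil_append, List.cons_append, List.cons.injEq] at h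
      obtain ⟨rfl, h2⟩ := h
      rw [h2] at hn
      exact absurd (by simp : x ∈ c ++ x :: d) (List.nodup_cons.mp hn).1
  | cons e a ih =>
    intro c b d hn h
    cases c with
    | nil =>
      simp only [List.cons_append, List.nil_append, List.cons.injEq] at h
      obtain ⟨rfl, h2⟩ := h
      exact absurd (List.mem_append.mpr (Or.inr List.mem_cons_self)) (List.nodup_cons.mp hn).1
    | cons y c =>
      simp only [List.cons_append, List.cons.injEq] at h
      obtain ⟨rfl, h2⟩ := h
      obtain ⟨rfl, rfl⟩ := ih (List.nodup_cons.mp hn).2 h2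
      exact ⟨rfl, rfl⟩

lemma walk_support_concat {u w : V} (p : G.Walk u w) : ∃ c, p.support = c ++ [w] := by
  induction p with
  | nil => exact ⟨[], rfl⟩
  | @cons a b c h p ih =>
    obtain ⟨l, hl⟩ := ih
    exact ⟨a :: l, by simp [hl]⟩

lemma support_dropUntil_decomp [DecidableEq V] {u x w : V} {p : G.Walk u w} (hp : p.IsPath)
    {a b : List V} (hdec : p.support = a ++ x :: b) (hx : x ∈ p.support) :
    (p.dropUntil x hx).support = x :: b := by
  have hsup : p.support = (p.takeUntil x hx).support ++ (p.dropUntil x hx).support.tail := by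
    conv_lhs => rw [← p.take_spec hx]
    exact Walk.support_append _ _
  obtain ⟨c, hc⟩ := walk_support_concat (p.takeUntil x hx)
  have hdrop := Walk.support_eq_cons (p.dropUntil x hx)
  have h2 : p.support = c ++ x :: (p.dropUntil x hx).support.tail := by
    rw [hsup, hc]; simp
  have hnd : (a ++ x :: b).Nodup := hdec ▸ hp.support_nodup
  obtain ⟨-, hb⟩ := nodup_split_unique hnd (hdec.symm.trans h2)
  rw [hdrop, ← hb]

end Helpers

lemma graphPath_inSubgraph_top {V : Type} {G : SimpleGraph V} (p : GraphPath G) :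
    p.InSubgraph ⊤ := by
  constructor
  · intro v _; simp [SimpleGraph.Subgraph.verts_top]
  · intro e he
    rw [SimpleGraph.Subgraph.edgeSet_top]
    exact p.walk.edges_subset_edgeSet he


/-- Theorem 4.2: given disjoint sets `A, B, X` of cardinality `κ`
each, with every vertex of `X` of degree `1`, a set `P` of `κ` node-disjoint paths
connecting every vertex of `A` to a distinct vertex of `B` (avoiding `X`), a set
`Q` of `κ` node-disjoint paths connecting every vertex of `A` to a distinct vertex
of `X` (each containing exactly one vertex of `X`, as an endpoint), and any integer
`1 ≤ D ≤ κ / (2 g²)`, either `H` contains an `(A, B, X)`-crossbar of width `g²`, or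
`H` contains a pseudo-grid of depth `D` with respect to `P, Q`. -/
theorem pseudo_grid_or_crossbar {V : Type} [Fintype V] (H : SimpleGraph V)
    (A B X : Set V) (κ g D : ℕ) (hg : 2 ≤ g) (hκ : 2 ≤ κ)
    (hAB : Disjoint A B) (hAX : Disjoint A X) (hBX : Disjoint B X)
    (hAcard : A.ncard = κ) (hBcard : B.ncard = κ) (hXcard : X.ncard = κ)
    (hXdeg : ∀ x ∈ X, (H.neighborSet x).ncard = 1)
    (P Q : Fin κ → GraphPath H)
    (hPdisj : NodeDisjointFamily P) (hQdisj : NodeDisjointFamily Q)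
    (hPfirst : ∀ i, (P i).first ∈ A) (hPlast : ∀ i, (P i).last ∈ B)
    (hQfirst : ∀ i, (Q i).first = (P i).first) (hQlast : ∀ i, (Q i).last ∈ X)
    (hPontoA : ∀ a ∈ A, ∃ i, (P i).first = a)
    (hPnoX : ∀ i, ∀ x ∈ X, x ∉ (P i).support)
    (hQoneX : ∀ i, ∀ x ∈ X, x ∈ (Q i).support → x = (Q i).last)
    (hD : 1 ≤ D) (hDκ : 2 * g ^ 2 * D ≤ κ) :
    Nonempty (CrossbarIn H ⊤ A B X (g ^ 2)) ∨
      ∃ (R : Fin D → Set (Fin κ)) (Q' : Fin ((κ + 3) / 4) → GraphPath H)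
        (f : Fin ((κ + 3) / 4) → Fin κ),
        IsPseudoGrid X g κ D P Q R Q' f := by
  classical
  by_cases hcb : Nonempty (CrossbarIn H ⊤ A B X (g ^ 2))
  · exact Or.inl hcb
  right
  have hG2 : 4 ≤ g ^ 2 := by nlinarith
  set N := (κ + 3) / 4 with hN
  -- the union of supports of active P-paths
  set hitSet : Set (Fin κ) → Set V := fun U => ⋃ k ∈ U, (P k).support with hhitSet
  have hmem_hit : ∀ (U : Set (Fin κ)) (k : Fin κ) (x : V), k ∈ U → x ∈ (P k).support →
      x ∈ hitSet U := fun U k x hk hx => Set.mem_biUnion hk hx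
  -- last intersection of Q j with the active P-paths
  have hsplit : ∀ (U : Set (Fin κ)) (j : Fin κ), j ∈ U →
      ∃ (v : V) (l₁ l₂ : List V), (Q j).walk.support = l₁ ++ v :: l₂ ∧ v ∈ hitSet U ∧
        ∀ x ∈ l₂, x ∉ hitSet U := by
    intro U j hj
    apply exists_last_hit
    refine ⟨(Q j).first, (Q j).walk.start_mem_support, ?_⟩
    refine hmem_hit U j _ hj ?_
    show (Q j).first ∈ (P j).walk.support
    rw [hQfirst j]
    exact (P j).walk.start_mem_support
  choose vm l1m l2m hLdec hvmem hl2 using hsplit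
  have hvk' : ∀ (U : Set (Fin κ)) (j : Fin κ) (hj : j ∈ U),
      ∃ k, k ∈ U ∧ vm U j hj ∈ (P k).support := by
    intro U j hj
    have := hvmem U j hj
    rw [hhitSet] at this
    simpa [Set.mem_iUnion] using this
  choose km hkU hvP using hvk'
  -- the vertex vm lies on exactly one P-path
  have hPuniq : ∀ (x : V) (k k' : Fin κ), x ∈ (P k).support → x ∈ (P k').support → k = k' := by
    intro x k k' h1 h2
    by_contra hne
    exact Set.disjoint_left.mp (hPdisj k k' hne) h1 h2
  -- the recursive peeling
  set Uf : ℕ → Set (Fin κ) := fun n => Nat.rec Set.univ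
    (fun _ Un => Un \ {k' | ∃ j, ∃ hj : j ∈ Un, km Un j hj = k'}) n with hUf
  set Rf : ℕ → Set (Fin κ) := fun n => {k' | ∃ j, ∃ hj : j ∈ Uf n, km (Uf n) j hj = k'}
    with hRf
  have hU0 : Uf 0 = Set.univ := rfl
  have hUsucc : ∀ n, Uf (n + 1) = Uf n \ Rf n := fun n => rfl
  have hRsubU : ∀ n, Rf n ⊆ Uf n := by
    rintro n k ⟨j, hj, rfl⟩
    exact hkU _ _ hj
  have hUstep : ∀ n, Uf (n + 1) ⊆ Uf n := by
    intro n
    rw [hUsucc n]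
    exact Set.diff_subset
  have hUmono : ∀ m n : ℕ, m ≤ n → Uf n ⊆ Uf m := by
    intro m n h
    induction h with
    | refl => exact subset_rfl
    | step h ih => exact (hUstep _).trans ih
  -- no crossbar implies every layer is small
  have hRcard : ∀ n, (Rf n).ncard < g ^ 2 := by
    intro n
    by_contra hge
    push_neg at hge
    apply hcb
    have hfin : (Rf n).Finite := Set.toFinite _
    obtain ⟨t, hts, htc⟩ := Finset.exists_subset_card_eq (s := hfin.toFinset) (n := g ^ 2)
      (by rwa [← Set.ncard_eq_toFinset_card _ hfin])
    set e : Fin (g ^ 2) → Fin κ := fun m => t.orderEmbOfFin htc m with he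
    have heinj : Function.Injective e := fun m m' h => (t.orderEmbOfFin htc).injective h
    have heR : ∀ m, e m ∈ Rf n := fun m =>
      hfin.mem_toFinset.mp (hts (t.orderEmbOfFin_mem htc m))
    have heU : ∀ m, e m ∈ Uf n := fun m => hRsubU n (heR m)
    have hw : ∀ m : Fin (g ^ 2), ∃ j, ∃ hj : j ∈ Uf n, km (Uf n) j hj = e m := fun m => heR m
    choose jm hjm hkm using hw
    have hjinj : ∀ m m', m ≠ m' → jm m ≠ jm m' := by
      intro m m' hne heq
      apply hne; apply heinj
      rw [← hkm m, ← hkm m']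
      congr 1
    -- the legs
    have hvmem' : ∀ m, vm (Uf n) (jm m) (hjm m) ∈ (Q (jm m)).walk.support := by
      intro m
      rw [hLdec (Uf n) (jm m) (hjm m)]
      simp
    set leg : Fin (g ^ 2) → GraphPath H := fun m =>
      ⟨vm (Uf n) (jm m) (hjm m), (Q (jm m)).last,
        (Q (jm m)).walk.dropUntil _ (hvmem' m), (Q (jm m)).isPath.dropUntil _⟩ with hleg
    have hlegsup : ∀ m, (leg m).walk.support
        = vm (Uf n) (jm m) (hjm m) :: l2m (Uf n) (jm m) (hjm m) := by
      intro m
      exact support_dropUntil_decomp (Q (jm m)).isPath (hLdec (Uf n) (jm m) (hjm m)) (hvmem' m)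
    have hlegsub : ∀ m, (leg m).support ⊆ (Q (jm m)).support := by
      intro m x hx
      exact Walk.support_dropUntil_subset _ _ hx
    -- membership in a leg: either the first vertex or avoiding all active paths
    have hlegmem : ∀ m x, x ∈ (leg m).support →
        x = vm (Uf n) (jm m) (hjm m) ∨ x ∉ hitSet (Uf n) := by
      intro m x hx
      have : x ∈ (leg m).walk.support := hx
      rw [hlegsup m] at this
      rcases List.mem_cons.mp this with rfl | hx'
      · exact Or.inl rfl
      · exact Or.inr (hl2 (Uf n) (jm m) (hjm m) x hx')
    refine ⟨⟨fun m => P (e m), leg, fun m => graphPath_inSubgraph_top _,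
      fun m => graphPath_inSubgraph_top _, fun m => hPfirst _, fun m => hPlast _,
      fun m m' hne => hPdisj _ _ (fun h => hne (heinj h)), ?_, fun m => hQlast _, ?_, ?_⟩⟩
    · -- Q_disjoint
      intro m m' hne
      exact (hQdisj _ _ (hjinj m m' hne)).mono (hlegsub m) (hlegsub m')
    · -- cross_disjoint
      intro m m' hne
      rw [Set.disjoint_left]
      intro x hxP hxleg
      rcases hlegmem m' x hxleg with rfl | hmiss
      · have h1 := hvP (Uf n) (jm m') (hjm m')
        rw [hkm m'] at h1
        exact Set.disjoint_left.mp (hPdisj _ _ (fun h => hne (heinj h))) hxP h1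
      · exact hmiss (hmem_hit (Uf n) (e m) x (heU m) hxP)
    · -- touch
      intro m
      apply Set.eq_of_subset_of_subset
      · rintro x ⟨hxP, hxleg⟩
        rcases hlegmem m x hxleg with rfl | hmiss
        · rfl
        · exact absurd (hmem_hit (Uf n) (e m) x (heU m) hxP) hmiss
      · rintro x rfl
        constructor
        · show (leg m).first ∈ (P (e m)).support
          have h1 := hvP (Uf n) (jm m) (hjm m)
          rw [hkm m] at h1
          exact h1
        · show (leg m).first ∈ (leg m).walk.support
          exact (leg m).walk.start_mem_support
  -- cardinality of survivors
  have hUcard : ∀ n, κ - n * g ^ 2 ≤ (Uf n).ncard := by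
    intro n
    induction n with
    | zero =>
      rw [hU0, Set.ncard_univ, Nat.card_eq_fintype_card, Fintype.card_fin]
      omega
    | succ n ih =>
      have h1 : (Uf (n + 1)).ncard = (Uf n).ncard - (Rf n).ncard := by
        rw [hUsucc n]
        exact Set.ncard_diff (hRsubU n) (Set.toFinite _)
      have h2 := hRcard n
      have hmul : (n + 1) * g ^ 2 = n * g ^ 2 + g ^ 2 := by ring
      have : (Uf n).ncard ≤ κ := by
        have := Set.ncard_le_ncard (Set.subset_univ (Uf n)) (Set.toFinite _)
        simpa [Set.ncard_univ] using this
      omega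
  have hND : N ≤ (Uf D).ncard := by
    have h1 := hUcard D
    have h2 : 4 ≤ D * g ^ 2 := le_trans (by omega) (Nat.mul_le_mul hD hG2)
    have h3 : 2 * (D * g ^ 2) ≤ κ := by
      calc 2 * (D * g ^ 2) = 2 * g ^ 2 * D := by ring
      _ ≤ κ := hDκ
    omega
  -- choose the surviving Q-indices
  have hfinU : (Uf D).Finite := Set.toFinite _
  obtain ⟨t, hts, htc⟩ := Finset.exists_subset_card_eq (s := hfinU.toFinset) (n := N)
    (by rwa [← Set.ncard_eq_toFinset_card _ hfinU])
  set f : Fin N → Fin κ := fun j => t.orderEmbOfFin htc j with hf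
  have hfinj : Function.Injective f := fun a b h => (t.orderEmbOfFin htc).injective h
  have hfU : ∀ j, f j ∈ Uf D := fun j =>
    hfinU.mem_toFinset.mp (hts (t.orderEmbOfFin_mem htc j))
  have hfUi : ∀ (j : Fin N) (i : ℕ), i ≤ D → f j ∈ Uf i := fun j i hi => hUmono i D hi (hfU j)
  -- each layer's hit vertex lies strictly after the final cut vertex
  have hmem_b : ∀ (j : Fin N) (i : ℕ) (hi : i < D),
      vm (Uf i) (f j) (hfUi j i (le_of_lt hi)) ∈ l2m (Uf D) (f j) (hfU j) := by
    intro j i hi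
    have hji : f j ∈ Uf i := hfUi j i (le_of_lt hi)
    have hnd : (Q (f j)).walk.support.Nodup := (Q (f j)).isPath.support_nodup
    have hdecD := hLdec (Uf D) (f j) (hfU j)
    have hdecI := hLdec (Uf i) (f j) hji
    set w := vm (Uf D) (f j) (hfU j)
    set vi := vm (Uf i) (f j) hji
    set kD := km (Uf D) (f j) (hfU j)
    set kI := km (Uf i) (f j) hji
    have hkDU : kD ∈ Uf D := hkU _ _ _
    have hkIR : kI ∈ Rf i := ⟨f j, hji, rfl⟩
    have hkne : kD ≠ kI := by
      intro h
      have : kD ∈ Uf (i + 1) := hUmono (i + 1) D hi (by exact hkDU)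
      rw [hUsucc i] at this
      exact this.2 (h ▸ hkIR)
    have hwv : w ≠ vi := by
      intro h
      exact hkne (hPuniq w kD kI (hvP _ _ _) (h ▸ hvP (Uf i) (f j) hji))
    have hwhitI : w ∈ hitSet (Uf i) :=
      hmem_hit (Uf i) kD w (hUmono i D (le_of_lt hi) hkDU) (hvP _ _ _)
    have hwnb : w ∉ l2m (Uf i) (f j) hji := fun h => hl2 (Uf i) (f j) hji w h hwhitI
    have hwL : w ∈ (Q (f j)).walk.support := by rw [hdecD]; simp
    have hwa : w ∈ l1m (Uf i) (f j) hji := by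
      rw [hdecI] at hwL
      rcases List.mem_append.mp hwL with h | h
      · exact h
      · rcases List.mem_cons.mp h with h | h
        · exact absurd h hwv
        · exact absurd h hwnb
    obtain ⟨p', q', hpq⟩ := List.append_of_mem hwa
    have hLw : (Q (f j)).walk.support = p' ++ w :: (q' ++ vi :: l2m (Uf i) (f j) hji) := by
      rw [hdecI, hpq]; simp
    have hndw : (l1m (Uf D) (f j) (hfU j) ++ w :: l2m (Uf D) (f j) (hfU j)).Nodup :=
      hdecD ▸ hnd
    obtain ⟨-, hb⟩ := nodup_split_unique hndw (hdecD.symm.trans hLw)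
    rw [hb]
    simp
  -- the final truncated paths
  have hbne : ∀ j : Fin N, l2m (Uf D) (f j) (hfU j) ≠ [] :=
    fun j => List.ne_nil_of_mem (hmem_b j 0 (by omega))
  set uj : Fin N → V := fun j => (l2m (Uf D) (f j) (hfU j)).head (hbne j) with huj
  have hbcons : ∀ j, l2m (Uf D) (f j) (hfU j) = uj j :: (l2m (Uf D) (f j) (hfU j)).tail :=
    fun j => (List.cons_head_tail (hbne j)).symm
  have huj_mem : ∀ j, uj j ∈ (Q (f j)).walk.support := by
    intro j
    rw [hLdec (Uf D) (f j) (hfU j), hbcons j]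
    simp
  set Q' : Fin N → GraphPath H := fun j =>
    ⟨uj j, (Q (f j)).last, (Q (f j)).walk.dropUntil (uj j) (huj_mem j),
      (Q (f j)).isPath.dropUntil _⟩ with hQ'
  have hQ'sup : ∀ j, (Q' j).walk.support = l2m (Uf D) (f j) (hfU j) := by
    intro j
    have hdec2 : (Q (f j)).walk.support
        = (l1m (Uf D) (f j) (hfU j) ++ [vm (Uf D) (f j) (hfU j)])
            ++ uj j :: (l2m (Uf D) (f j) (hfU j)).tail := by
      rw [hLdec (Uf D) (f j) (hfU j)]
      conv_lhs => rw [hbcons j]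
      simp
    rw [support_dropUntil_decomp (Q (f j)).isPath hdec2 (huj_mem j)]
    exact (hbcons j).symm
  have hQ'avoid : ∀ j x, x ∈ (Q' j).support → x ∉ hitSet (Uf D) := by
    intro j x hx
    have : x ∈ (Q' j).walk.support := hx
    rw [hQ'sup j] at this
    exact hl2 (Uf D) (f j) (hfU j) x this
  have hQ'sub : ∀ j, (Q' j).support ⊆ (Q (f j)).support := by
    intro j x hx
    exact Walk.support_dropUntil_subset _ _ hx
  -- membership of the not-yet-peeled indices in Uf D
  have hUD_of : ∀ k : Fin κ, (∀ i : Fin D, k ∉ Rf i.val) → k ∈ Uf D := by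
    intro k hk
    have : ∀ n, n ≤ D → k ∈ Uf n := by
      intro n
      induction n with
      | zero => intro _; rw [hU0]; trivial
      | succ n ih =>
        intro hn
        rw [hUsucc n]
        exact ⟨ih (by omega), hk ⟨n, by omega⟩⟩
    exact this D le_rfl
  refine ⟨fun i => Rf i.val, Q', f, ?_, fun i => le_of_lt (hRcard i.val), hfinj, ?_, ?_, ?_, ?_,
    ?_, ?_⟩
  · -- layers pairwise disjoint
    have key : ∀ m n : ℕ, m < n → n < D → Disjoint (Rf m) (Rf n) := by
      intro m n hmn hnD
      rw [Set.disjoint_left]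
      intro k hkm' hkn
      have : k ∈ Uf (m + 1) := hUmono (m + 1) n hmn (hRsubU n hkn)
      rw [hUsucc m] at this
      exact this.2 hkm'
    intro i j hij
    rcases lt_or_gt_of_ne (fun h : i.val = j.val => hij (Fin.ext h)) with h | h
    · exact key i.val j.val h j.isLt
    · exact (key j.val i.val h i.isLt).symm
  · -- f avoids all layers
    intro j i
    have : f j ∈ Uf (i.val + 1) := hUmono (i.val + 1) D i.isLt (hfU j)
    rw [hUsucc i.val] at this
    exact this.2
  · -- subpath
    intro j
    show (Q' j).walk.support <:+: (Q (f j)).walk.support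
    rw [hQ'sup j]
    refine List.IsSuffix.isInfix ⟨l1m (Uf D) (f j) (hfU j) ++ [vm (Uf D) (f j) (hfU j)], ?_⟩
    rw [hLdec (Uf D) (f j) (hfU j)]
    simp
  · -- Xor'
    intro j
    have hlastX : (Q' j).last ∈ X := hQlast (f j)
    have hfirst : (Q' j).first ∉ X := by
      intro hX
      have heq : uj j = (Q (f j)).last := hQoneX (f j) (uj j) hX (huj_mem j)
      have hpath : ((Q' j).walk.copy heq rfl).IsPath := by
        rw [Walk.isPath_copy]
        exact (Q' j).isPath
      have hnil := Walk.isPath_iff_eq_nil.mp hpath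
      have hsup : (Q' j).walk.support = [(Q (f j)).last] := by
        rw [← Walk.support_copy (Q' j).walk heq rfl, hnil, Walk.support_nil]
      have hv0 := hmem_b j 0 (by omega)
      rw [← hQ'sup j, hsup] at hv0
      have hlasteq : vm (Uf 0) (f j) (hfUi j 0 (by omega)) = (Q (f j)).last := by
        simpa using hv0
      exact hPnoX (km (Uf 0) (f j) (hfUi j 0 (by omega))) _ (hQlast (f j))
        (hlasteq ▸ hvP (Uf 0) (f j) (hfUi j 0 (by omega)))
    exact Or.inr ⟨hlastX, hfirst⟩
  · -- node-disjoint
    intro j j' hne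
    exact (hQdisj _ _ (fun h => hne (hfinj h))).mono (hQ'sub j) (hQ'sub j')
  · -- P1
    intro j k hk
    have hkUD : k ∈ Uf D := hUD_of k hk
    rw [Set.disjoint_left]
    intro x hx hxP
    exact hQ'avoid j x hx (hmem_hit (Uf D) k x hkUD hxP)
  · -- P2
    intro i
    have hempty : {j : Fin N | ∀ k ∈ Rf i.val, Disjoint (Q' j).support (P k).support} = ∅ := by
      rw [Set.eq_empty_iff_forall_notMem]
      intro j hj
      have hji : f j ∈ Uf i.val := hfUi j i.val (le_of_lt i.isLt)
      have hkIR : km (Uf i.val) (f j) hji ∈ Rf i.val := ⟨f j, hji, rfl⟩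
      have hdisj := hj _ hkIR
      have hv1 : vm (Uf i.val) (f j) hji ∈ (Q' j).support := by
        show _ ∈ (Q' j).walk.support
        rw [hQ'sup j]
        exact hmem_b j i.val i.isLt
      exact Set.disjoint_left.mp hdisj hv1 (hvP _ _ _)
    rw [hempty]
    simp
end

section
/- Let H be a graph with disjoint vertex sets A, B, X, each of cardinality κ, with every vertex of X of degree 1 in H. Among all pairs (P, Q), where P is a set of κ node-disjoint paths connecting every vertex of A to a distinct vertex of B and Q is a set of κ node-disjoint paths connecting every vertex of A to a distinct vertex of X, let (P, Q) be a pair minimizing the number of edges of the graph H(P,Q) = ⋃_{P ∈ P ∪ Q} P. Let R ⊆ P, let P' = P∖R, let A' ⊆ A and B' ⊆ B be the sets of endpoints of the paths of R in A and B respectively, and let Q* be any set of node-disjoint paths, each a subpath of some path of {Q_P : P ∈ P'}, such that the paths of Q* are completely disjoint from the paths of P'. Let H' be the union of all paths in R and all paths in Q*. Then for any edge e of H' lying on a path of R but lying on no path of Q, the largest number of node-disjoint paths connecting vertices of A' to vertices of B' in H'∖{e} is at most |R| − 1. -/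
open SimpleGraph

lemma walk_edges_mem_of_support_split {V : Type} {G : SimpleGraph V} {u v a b : V}
    (w : G.Walk u v) (l₁ l₂ : List V) (h : w.support = l₁ ++ a :: b :: l₂) :
    s(a, b) ∈ w.edges := by
  induction w generalizing l₁ with
  | nil =>
    simp only [Walk.support_nil] at h
    cases l₁ <;> simp_all
  | @cons u x v h' w ih =>
    rw [Walk.support_cons] at h
    cases l₁ with
    | nil =>
      simp only [List.nil_append, List.cons.injEq] at h
      obtain ⟨rfl, h2⟩ := h
      have hx : x = b := by
        rw [w.support_eq_cons] at h2
        exact ((List.cons.injEq _ _ _ _).mp h2).1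
      rw [Walk.edges_cons]
      simp [hx]
    | cons c l₁' =>
      simp only [List.cons_append, List.cons.injEq] at h
      rw [Walk.edges_cons]
      exact List.mem_cons_of_mem _ (ih l₁' h.2)

lemma walk_support_split_of_mem_edges {V : Type} {G : SimpleGraph V} {u v : V}
    (w : G.Walk u v) {e : Sym2 V} (he : e ∈ w.edges) :
    ∃ a b l₁ l₂, w.support = l₁ ++ a :: b :: l₂ ∧ e = s(a, b) := by
  induction w with
  | nil => simp at he
  | @cons u x v h' w ih =>
    rw [Walk.edges_cons, List.mem_cons] at he
    cases he with
    | inl h =>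
      exact ⟨u, x, [], w.support.tail,
        by rw [Walk.support_cons, w.support_eq_cons]; rfl, h⟩
    | inr h =>
      obtain ⟨a, b, l₁, l₂, h1, h2⟩ := ih h
      exact ⟨a, b, u :: l₁, l₂, by rw [Walk.support_cons, h1]; rfl, h2⟩

lemma subpath_edges {V : Type} {G : SimpleGraph V} {p q : GraphPath G}
    (h : p.IsSubpathOf q) : p.edges ⊆ q.edges := by
  intro e he
  obtain ⟨a, b, l₁, l₂, h1, rfl⟩ := walk_support_split_of_mem_edges p.walk he
  obtain ⟨s₁, s₂, hs⟩ := h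
  have hsup : q.walk.support = (s₁ ++ l₁) ++ a :: b :: (l₂ ++ s₂) := by
    rw [← hs, h1]; simp
  exact walk_edges_mem_of_support_split q.walk _ _ hsup

lemma graphPath_first_mem_support {V : Type} {G : SimpleGraph V} (p : GraphPath G) :
    p.first ∈ p.support := p.walk.start_mem_support

lemma graphPath_edge_endpoints_mem {V : Type} {G : SimpleGraph V} {p q : GraphPath G}
    {e : Sym2 V} (hep : e ∈ p.edges) (heq : e ∈ q.edges)
    (hd : Disjoint p.support q.support) : False := by
  induction e using Sym2.ind with
  | _ a b =>
    have h1 : a ∈ p.walk.support := SimpleGraph.Walk.fst_mem_support_of_mem_edges _ hep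
    have h2 : a ∈ q.walk.support := SimpleGraph.Walk.fst_mem_support_of_mem_edges _ heq
    exact Set.disjoint_left.mp hd h1 h2

/-- Observation 4.3: if `(P, Q)` is a pair of path families
minimizing the number of edges of `H(P, Q)`, `R ⊆ P` is any subset of paths with
endpoint sets `A' ⊆ A`, `B' ⊆ B`, and `Q*` is any set of node-disjoint paths, each
a subpath of a `Q`-path of `P∖R` and completely disjoint from the paths of `P∖R`,
then, letting `H'` be the union of the paths of `R` and of `Q*`, for every edge `e`
of `H'` lying on a path of `R` but on no path of `Q`, every family of node-disjoint
`A'`–`B'` paths in `H'∖{e}` has fewer than `|R|` paths. -/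
theorem minimal_pair_unique_linkage {V : Type} [Fintype V] (H : SimpleGraph V)
    (A B X : Set V) (κ : ℕ)
    (hAB : Disjoint A B) (hAX : Disjoint A X) (hBX : Disjoint B X)
    (hAcard : A.ncard = κ) (hBcard : B.ncard = κ) (hXcard : X.ncard = κ)
    (hXdeg : ∀ x ∈ X, (H.neighborSet x).ncard = 1)
    (P Q : Fin κ → GraphPath H)
    (hvalid : ValidLinkPair H A B X κ P Q)
    (hpair : ∀ i, (Q i).first = (P i).first)
    (hmin : ∀ P₂ Q₂ : Fin κ → GraphPath H, ValidLinkPair H A B X κ P₂ Q₂ →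
      (LinkPairEdges P Q).ncard ≤ (LinkPairEdges P₂ Q₂).ncard)
    (Rset : Set (Fin κ))
    (Qstar : Set (GraphPath H))
    (hQstarDisj : Qstar.Pairwise fun p q => Disjoint p.support q.support)
    (hQstarSub : ∀ q ∈ Qstar, ∃ i ∉ Rset, q.IsSubpathOf (Q i))
    (hQstarP' : ∀ q ∈ Qstar, ∀ i ∉ Rset, Disjoint q.support (P i).support)
    (e : Sym2 V)
    (heR : ∃ i ∈ Rset, e ∈ (P i).edges)
    (heQ : ∀ i, e ∉ (Q i).edges)
    (n : ℕ) (F : Fin n → GraphPath H)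
    (hFdisj : NodeDisjointFamily F)
    (hFfirst : ∀ j, ∃ i ∈ Rset, (F j).first = (P i).first)
    (hFlast : ∀ j, ∃ i ∈ Rset, (F j).last = (P i).last)
    (hFsupp : ∀ j, (F j).support ⊆
      (⋃ i ∈ Rset, (P i).support) ∪ ⋃ q ∈ Qstar, q.support)
    (hFedges : ∀ j, (F j).edges ⊆
      ((⋃ i ∈ Rset, (P i).edges) ∪ ⋃ q ∈ Qstar, q.edges) \ {e}) :
    n < Rset.ncard := by
  classical
  by_contra hcon
  push_neg at hcon
  obtain ⟨hPnd, hQnd, hPab, hQax, hPsurj, hQsurj⟩ := hvalid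
  choose gi hgiR hgiF using hFfirst
  have hgi_inj : Function.Injective gi := by
    intro j j' h
    by_contra hne
    have hd := hFdisj j j' hne
    have h1 : (F j).first ∈ (F j').support := by
      rw [hgiF j, h, ← hgiF j']
      exact graphPath_first_mem_support (F j')
    exact Set.disjoint_left.mp hd (graphPath_first_mem_support (F j)) h1
  haveI : Fintype ↥Rset := Fintype.ofFinite _
  set g : Fin n → ↥Rset := fun j => ⟨gi j, hgiR j⟩ with hg
  have hg_inj : Function.Injective g := fun j j' h =>
    hgi_inj (congrArg Subtype.val h)
  have hcard : Fintype.card ↥Rset = Rset.ncard := by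
    rw [Set.ncard_eq_toFinset_card', Set.toFinset_card]
  have hnle : n ≤ Rset.ncard := by
    have := Fintype.card_le_of_injective g hg_inj
    simpa [hcard] using this
  have hneq : n = Rset.ncard := le_antisymm hnle hcon
  have hg_bij : Function.Bijective g :=
    (Fintype.bijective_iff_injective_and_card g).2 ⟨hg_inj, by simp [hcard, hneq]⟩
  have hg_surj := hg_bij.2
  let σ : ↥Rset → Fin n := Function.surjInv hg_surj
  have hσ : ∀ (x : ↥Rset), gi (σ x) = x.val := fun x =>
    congrArg Subtype.val (Function.surjInv_eq hg_surj x)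
  let P₂ : Fin κ → GraphPath H := fun i =>
    if h : i ∈ Rset then F (σ ⟨i, h⟩) else P i
  have hP₂mem : ∀ i (h : i ∈ Rset), P₂ i = F (σ ⟨i, h⟩) := fun i h => dif_pos h
  have hP₂not : ∀ i, i ∉ Rset → P₂ i = P i := fun i h => dif_neg h
  have hP₂first : ∀ i (h : i ∈ Rset), (P₂ i).first = (P i).first := by
    intro i h
    rw [hP₂mem i h, hgiF (σ ⟨i, h⟩), hσ ⟨i, h⟩]
  have hsupF : ∀ j (i : Fin κ), i ∉ Rset →
      Disjoint (F j).support (P i).support := by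
    intro j i hi
    rw [Set.disjoint_left]
    intro v hv hvP
    rcases hFsupp j hv with h | h
    · simp only [Set.mem_iUnion] at h
      obtain ⟨k, hk, hvk⟩ := h
      have hki : k ≠ i := fun hq => hi (hq ▸ hk)
      exact Set.disjoint_left.mp (hPnd k i hki) hvk hvP
    · simp only [Set.mem_iUnion] at h
      obtain ⟨q, hq, hvq⟩ := h
      exact Set.disjoint_left.mp (hQstarP' q hq i hi) hvq hvP
  have hσ_ne : ∀ (i i' : Fin κ) (h : i ∈ Rset) (h' : i' ∈ Rset), i ≠ i' →
      σ ⟨i, h⟩ ≠ σ ⟨i', h'⟩ := by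
    intro i i' h h' hne hEq
    apply hne
    have := congrArg gi hEq
    rw [hσ ⟨i, h⟩, hσ ⟨i', h'⟩] at this
    exact this
  have hP₂nd : NodeDisjointFamily P₂ := by
    intro i j hij
    by_cases hi : i ∈ Rset <;> by_cases hj : j ∈ Rset
    · rw [hP₂mem i hi, hP₂mem j hj]
      exact hFdisj _ _ (hσ_ne i j hi hj hij)
    · rw [hP₂mem i hi, hP₂not j hj]
      exact hsupF _ j hj
    · rw [hP₂not i hi, hP₂mem j hj]
      exact (hsupF _ i hi).symm
    · rw [hP₂not i hi, hP₂not j hj]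
      exact hPnd i j hij
  have hvalid₂ : ValidLinkPair H A B X κ P₂ Q := by
    refine ⟨hP₂nd, hQnd, ?_, hQax, ?_, hQsurj⟩
    · intro i
      by_cases hi : i ∈ Rset
      · constructor
        · rw [hP₂first i hi]; exact (hPab i).1
        · rw [hP₂mem i hi]
          obtain ⟨i', hi', hlast⟩ := hFlast (σ ⟨i, hi⟩)
          rw [hlast]; exact (hPab i').2
      · rw [hP₂not i hi]; exact hPab i
    · intro a ha
      obtain ⟨i, hi⟩ := hPsurj a ha
      refine ⟨i, ?_⟩
      by_cases h : i ∈ Rset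
      · rw [hP₂first i h]; exact hi
      · rw [hP₂not i h]; exact hi
  obtain ⟨i₀, hi₀, hei₀⟩ := heR
  have he_mem : e ∈ LinkPairEdges P Q :=
    Or.inl (Set.mem_iUnion.mpr ⟨i₀, hei₀⟩)
  have hsubset : LinkPairEdges P₂ Q ⊆ LinkPairEdges P Q \ {e} := by
    intro f hf
    rcases hf with hf | hf
    · simp only [Set.mem_iUnion] at hf
      obtain ⟨i, hfi⟩ := hf
      by_cases hi : i ∈ Rset
      · rw [hP₂mem i hi] at hfi
        have := hFedges (σ ⟨i, hi⟩) hfi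
        obtain ⟨hin, hne⟩ := this
        refine ⟨?_, hne⟩
        rcases hin with h | h
        · simp only [Set.mem_iUnion] at h
          obtain ⟨k, _, hk⟩ := h
          exact Or.inl (Set.mem_iUnion.mpr ⟨k, hk⟩)
        · simp only [Set.mem_iUnion] at h
          obtain ⟨q, hq, hfq⟩ := h
          obtain ⟨i', _, hsub⟩ := hQstarSub q hq
          exact Or.inr (Set.mem_iUnion.mpr ⟨i', subpath_edges hsub hfq⟩)
      · rw [hP₂not i hi] at hfi
        refine ⟨Or.inl (Set.mem_iUnion.mpr ⟨i, hfi⟩), ?_⟩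
        intro hfe
        rw [Set.mem_singleton_iff] at hfe
        subst hfe
        have hne : i ≠ i₀ := fun hq => hi (hq ▸ hi₀)
        exact graphPath_edge_endpoints_mem hfi hei₀ (hPnd i i₀ hne)
    · simp only [Set.mem_iUnion] at hf
      obtain ⟨i, hfi⟩ := hf
      refine ⟨Or.inr (Set.mem_iUnion.mpr ⟨i, hfi⟩), ?_⟩
      intro hfe
      rw [Set.mem_singleton_iff] at hfe
      exact heQ i (hfe ▸ hfi)
  have hss : LinkPairEdges P₂ Q ⊂ LinkPairEdges P Q := by
    rw [Set.ssubset_iff_of_subset (hsubset.trans Set.diff_subset)]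
    exact ⟨e, he_mem, fun h => (hsubset h).2 rfl⟩
  have hlt : (LinkPairEdges P₂ Q).ncard < (LinkPairEdges P Q).ncard :=
    Set.ncard_lt_ncard hss (Set.toFinite _)
  exact absurd (hmin P₂ Q hvalid₂) (not_le.mpr hlt)
end

section
/- Let Ĝ be a graph and Â, B̂ ⊆ V(Ĝ) two subsets of its vertices with |Â| = |B̂|, such that Ĝ has the perfect unique linkage property with respect to (Â, B̂), with the unique (Â,B̂)-linkage denoted by R̂ (each path directed from its Â-endpoint to its B̂-endpoint). Then there is a bijection μ: V(Ĝ) → {1,…,|V(Ĝ)|} with the following properties. For each integer t > 0, let S_t contain, for every path R ∈ R̂, the first vertex v on R with μ(v) ≥ t, or the last vertex of R if no such vertex exists; let Y_t = {v ∈ V(Ĝ) : μ(v) < t} and Z_t = {v ∈ V(Ĝ) : μ(v) ≥ t}. Then: (1) for each path R ∈ R̂ and every pair v, v' of its vertices with v' appearing strictly before v on R, μ(v') < μ(v); and (2) for every integer 0 < t ≤ |V(Ĝ)|, the graph Ĝ∖S_t contains no path connecting a vertex of Y_t to a vertex of Z_t. -/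
open SimpleGraph

namespace NumLem

variable {α : Type} [DecidableEq α]

theorem split_idxOf {l₁ l₂ : List α} {u : α} (h : (l₁ ++ u :: l₂).Nodup) :
    (l₁ ++ u :: l₂).idxOf u = l₁.length := by
  have hu : u ∉ l₁ := by
    rw [List.nodup_append] at h
    exact fun hm => h.2.2 u hm u List.mem_cons_self rfl
  rw [List.idxOf_append_of_notMem hu, List.idxOf_cons_self, Nat.add_zero]

theorem idx_lt_of_split {l l₁ l₂ l₃ : List α} {u v : α} (hnd : l.Nodup)
    (h : l = l₁ ++ u :: (l₂ ++ v :: l₃)) :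
    u ∈ l ∧ v ∈ l ∧ u ≠ v ∧ l.idxOf u < l.idxOf v := by
  subst h
  refine ⟨by simp, by simp, ?_, ?_⟩
  · have h2 := hnd
    rw [List.nodup_append] at h2
    have := h2.2.1
    rw [List.nodup_cons] at this
    intro he
    exact this.1 (he ▸ (by simp : v ∈ l₂ ++ v :: l₃))
  · have h1 : (l₁ ++ u :: (l₂ ++ v :: l₃)).idxOf u = l₁.length := split_idxOf hnd
    have hre : l₁ ++ u :: (l₂ ++ v :: l₃) = (l₁ ++ u :: l₂) ++ v :: l₃ := by simp
    have h2 : (l₁ ++ u :: (l₂ ++ v :: l₃)).idxOf v = (l₁ ++ u :: l₂).length := by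
      rw [hre]; exact split_idxOf (hre ▸ hnd)
    rw [h1, h2]
    simp only [List.length_append, List.length_cons]
    omega

theorem idx_inj {l : List α} {u v : α} (hu : u ∈ l) (hv : v ∈ l)
    (h : l.idxOf u = l.idxOf v) : u = v := by
  have h1 := List.getElem_idxOf (List.idxOf_lt_length_iff.2 hu)
  have h2 := List.getElem_idxOf (List.idxOf_lt_length_iff.2 hv)
  rw [← h1, ← h2]
  congr 1

theorem idx_lt_of_mem_take {l : List α} {x : α} {k : ℕ} (h : x ∈ l.take k) :
    l.idxOf x < k := by
  induction l generalizing k with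
  | nil => simp at h
  | cons a t ih =>
    cases k with
    | zero => simp at h
    | succ k =>
      rw [List.take_succ_cons, List.mem_cons] at h
      by_cases hx : x = a
      · subst hx; rw [List.idxOf_cons_self]; omega
      · have := ih (h.resolve_left hx)
        rw [List.idxOf_cons_ne _ (Ne.symm hx)]
        omega

theorem split_of_idx_lt {l : List α} {u v : α} (hu : u ∈ l) (hv : v ∈ l)
    (hlt : l.idxOf u < l.idxOf v) :
    ∃ l₁ l₂ l₃, l = l₁ ++ u :: (l₂ ++ v :: l₃) := by
  have hul : l.idxOf u < l.length := List.idxOf_lt_length_iff.2 hu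
  have hvd : v ∈ l.drop (l.idxOf u + 1) := by
    by_contra hc
    have : v ∈ l.take (l.idxOf u + 1) := by
      have := List.take_append_drop (l.idxOf u + 1) l
      rcases List.mem_append.1 (this ▸ hv) with h | h
      · exact h
      · exact absurd h hc
    have := idx_lt_of_mem_take this
    omega
  obtain ⟨l₂, l₃, hd⟩ := List.append_of_mem hvd
  have h2 : l.take (l.idxOf u + 1) = l.take (l.idxOf u) ++ [u] := by
    rw [List.take_succ]
    congr 1
    rw [List.getElem?_eq_getElem hul, List.getElem_idxOf hul]
    rfl
  refine ⟨l.take (l.idxOf u), l₂, l₃, ?_⟩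
  conv_lhs => rw [← List.take_append_drop (l.idxOf u + 1) l]
  rw [h2, hd]
  simp

theorem le_idx_of_mem_drop {l : List α} {x : α} {k : ℕ} (hnd : l.Nodup)
    (h : x ∈ l.drop k) : k ≤ l.idxOf x := by
  by_cases hk : k ≤ l.length
  · have hnotin : x ∉ l.take k := by
      intro hx
      have hd : (l.take k).Disjoint (l.drop k) := by
        have := hnd
        rw [← List.take_append_drop k l, List.nodup_append] at this
        exact fun _ ha hb => this.2.2 _ ha _ hb rfl
      exact hd hx h
    have : l.idxOf x = (l.take k).length + (l.drop k).idxOf x := by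
      conv_lhs => rw [← List.take_append_drop k l]
      exact List.idxOf_append_of_notMem hnotin
    rw [this, List.length_take]
    omega
  · rw [List.drop_eq_nil_of_le (by omega)] at h
    simp at h

theorem take_disjoint_drop {l : List α} {i j : ℕ} (hnd : l.Nodup) (hij : i ≤ j) :
    (l.take i).Disjoint (l.drop j) := by
  intro a ha ha'
  have h1 := idx_lt_of_mem_take ha
  have h2 := le_idx_of_mem_drop hnd ha'
  omega

theorem mem_take_self {l : List α} {x : α} (h : x ∈ l) :
    x ∈ l.take (l.idxOf x + 1) := by
  induction l with
  | nil => simp at h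
  | cons a t ih =>
    by_cases hx : x = a
    · subst hx; simp [List.idxOf_cons_self]
    · rw [List.idxOf_cons_ne _ (Ne.symm hx), List.take_succ_cons]
      exact List.mem_cons_of_mem _ (ih ((List.mem_cons.1 h).resolve_left hx))

theorem mem_drop_self {l : List α} {x : α} (h : x ∈ l) :
    x ∈ l.drop (l.idxOf x) := by
  induction l with
  | nil => simp at h
  | cons a t ih =>
    by_cases hx : x = a
    · subst hx; simp [List.idxOf_cons_self]
    · rw [List.idxOf_cons_ne _ (Ne.symm hx), List.drop_succ_cons]
      exact ih ((List.mem_cons.1 h).resolve_left hx)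

end NumLem

section WalkHelpers

variable {V : Type} {G : SimpleGraph V} [DecidableEq V]

theorem NumLem.support_takeUntil_eq {a b x : V} (w : G.Walk a b) (h : x ∈ w.support) :
    (w.takeUntil x h).support = w.support.take (w.support.idxOf x + 1) := by
  induction w with
  | nil =>
    rw [SimpleGraph.Walk.mem_support_nil_iff] at h
    subst x
    simp [SimpleGraph.Walk.takeUntil]
  | @cons a c b r q ih =>
    by_cases hax : a = x
    · subst hax
      simp [SimpleGraph.Walk.takeUntil, List.idxOf_cons_self]
    · have hx' : x ∈ q.support := by
        rcases List.mem_cons.1 (by rw [← SimpleGraph.Walk.support_cons r q]; exact h) with h1 | h1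
        · exact absurd h1.symm hax
        · exact h1
      simp only [SimpleGraph.Walk.takeUntil, dif_neg hax]
      rw [SimpleGraph.Walk.support_cons, SimpleGraph.Walk.support_cons,
        List.idxOf_cons_ne _ hax, List.take_succ_cons, ih hx']

theorem NumLem.support_dropUntil_eq {a b x : V} (w : G.Walk a b) (h : x ∈ w.support) :
    (w.dropUntil x h).support = w.support.drop (w.support.idxOf x) := by
  induction w with
  | nil =>
    rw [SimpleGraph.Walk.mem_support_nil_iff] at h
    subst x
    simp [SimpleGraph.Walk.dropUntil]
  | @cons a c b r q ih =>
    by_cases hax : a = x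
    · subst hax
      simp [SimpleGraph.Walk.dropUntil, List.idxOf_cons_self]
    · have hx' : x ∈ q.support := by
        rcases List.mem_cons.1 (by rw [← SimpleGraph.Walk.support_cons r q]; exact h) with h1 | h1
        · exact absurd h1.symm hax
        · exact h1
      simp only [SimpleGraph.Walk.dropUntil, dif_neg hax]
      rw [SimpleGraph.Walk.support_cons, List.idxOf_cons_ne _ hax, List.drop_succ_cons,
        ih hx']

theorem NumLem.exists_cross {S : Set V} :
    ∀ {a b : V} (w : G.Walk a b), a ∈ S → b ∉ S →
      ∃ u v, G.Adj u v ∧ u ∈ w.support ∧ v ∈ w.support ∧ u ∈ S ∧ v ∉ S := by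
  intro a b w
  induction w with
  | nil => intro h1 h2; exact absurd h1 h2
  | @cons a c b r q ih =>
    intro h1 h2
    by_cases hc : c ∈ S
    · obtain ⟨u, v, h3, h4, h5, h6, h7⟩ := ih hc h2
      exact ⟨u, v, h3, by simp [h4], by simp [h5], h6, h7⟩
    · exact ⟨a, c, r, by simp, by simp, h1, hc⟩

end WalkHelpers

section BeforeHelpers

variable {V : Type} {G : SimpleGraph V} [DecidableEq V]

theorem NumLem.beforeOn_spec {p : GraphPath G} {u v : V} (h : beforeOn p u v) :
    u ∈ p.walk.support ∧ v ∈ p.walk.support ∧ u ≠ v ∧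
      p.walk.support.idxOf u < p.walk.support.idxOf v := by
  obtain ⟨l₁, l₂, l₃, hs⟩ := h
  exact NumLem.idx_lt_of_split p.isPath.support_nodup hs

theorem NumLem.beforeOn_of_idx {p : GraphPath G} {u v : V} (hu : u ∈ p.walk.support)
    (hv : v ∈ p.walk.support) (hlt : p.walk.support.idxOf u < p.walk.support.idxOf v) :
    beforeOn p u v :=
  NumLem.split_of_idx_lt hu hv hlt

theorem NumLem.beforeOn_total {p : GraphPath G} {u v : V} (hu : u ∈ p.walk.support)
    (hv : v ∈ p.walk.support) (hne : u ≠ v) : beforeOn p u v ∨ beforeOn p v u := by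
  rcases lt_trichotomy (p.walk.support.idxOf u) (p.walk.support.idxOf v) with h | h | h
  · exact Or.inl (NumLem.beforeOn_of_idx hu hv h)
  · exact absurd (NumLem.idx_inj hu hv h) hne
  · exact Or.inr (NumLem.beforeOn_of_idx hv hu h)

theorem NumLem.not_beforeOn_self {p : GraphPath G} {u : V} : ¬ beforeOn p u u := by
  intro h
  exact (NumLem.beforeOn_spec h).2.2.1 rfl

end BeforeHelpers

section StepLemma

namespace NumLem

open SimpleGraph

variable {V : Type} {G : SimpleGraph V}

/-- The frontier of a prefix set `Y` with respect to the linkage `Rh`. -/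
def frontier (Rh : Set (GraphPath G)) (Y : Set V) : Set V :=
  {v | ∃ p ∈ Rh, v ∈ p.support ∧
    ((v ∉ Y ∧ ∀ u, beforeOn p u v → u ∈ Y) ∨ (v = p.last ∧ ∀ u ∈ p.support, u ∈ Y))}

/-- `Y` is a valid prefix set. -/
def ValidY (Rh : Set (GraphPath G)) (Y : Set V) : Prop :=
  (∀ p ∈ Rh, ∀ u v, beforeOn p u v → v ∈ Y → u ∈ Y) ∧
  (∀ u v, G.Adj u v → u ∈ Y → v ∉ Y → u ∈ frontier Rh Y ∨ v ∈ frontier Rh Y)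

theorem valid_empty (Rh : Set (GraphPath G)) : ValidY Rh (∅ : Set V) :=
  ⟨fun _ _ _ _ _ hv => absurd hv (Set.notMem_empty _),
   fun _ _ _ hu _ => absurd hu (Set.notMem_empty _)⟩

theorem eq_of_mem_support {Rh : Set (GraphPath G)}
    (hpair : Rh.Pairwise fun p q => Disjoint p.support q.support)
    {p q : GraphPath G} (hp : p ∈ Rh) (hq : q ∈ Rh) {x : V}
    (hxp : x ∈ p.support) (hxq : x ∈ q.support) : p = q := by
  by_contra hne
  exact Set.disjoint_left.1 (hpair hp hq hne) hxp hxq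

theorem exists_first_not {Y : Set V} :
    ∀ l : List V, (∃ x ∈ l, x ∉ Y) → ∃ l₁ s l₂, l = l₁ ++ s :: l₂ ∧ s ∉ Y ∧ ∀ u ∈ l₁, u ∈ Y := by
  intro l
  induction l with
  | nil => rintro ⟨x, hx, -⟩; simp at hx
  | cons a t ih =>
    intro h
    by_cases ha : a ∈ Y
    · have : ∃ x ∈ t, x ∉ Y := by
        obtain ⟨x, hx1, hx2⟩ := h
        rcases List.mem_cons.1 hx1 with rfl | hx1
        · exact absurd ha hx2
        · exact ⟨x, hx1, hx2⟩
      obtain ⟨l₁, s, l₂, h1, h2, h3⟩ := ih this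
      refine ⟨a :: l₁, s, l₂, by rw [h1]; rfl, h2, ?_⟩
      intro u hu
      rcases List.mem_cons.1 hu with rfl | hu
      · exact ha
      · exact h3 u hu
    · exact ⟨[], a, t, rfl, ha, by simp⟩

theorem exists_frontierVert [DecidableEq V] {Y : Set V} {p : GraphPath G}
    (h : ∃ v ∈ p.support, v ∉ Y) :
    ∃ s, s ∈ p.support ∧ s ∉ Y ∧ ∀ u, beforeOn p u s → u ∈ Y := by
  obtain ⟨l₁, s, l₂, hl, hs, hall⟩ := exists_first_not p.walk.support h
  refine ⟨s, by rw [GraphPath.support, Set.mem_setOf_eq, hl]; simp, hs, ?_⟩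
  intro u hu
  have hspec := beforeOn_spec hu
  have hidx : p.walk.support.idxOf s = l₁.length := by
    rw [hl]; exact split_idxOf (hl ▸ p.isPath.support_nodup)
  have hult : p.walk.support.idxOf u < l₁.length := by
    rw [← hidx]; exact hspec.2.2.2
  have humem : u ∈ p.walk.support.take l₁.length := by
    have h1 : u ∈ p.walk.support.take (p.walk.support.idxOf u + 1) := mem_take_self hspec.1
    have h2 : p.walk.support.take (p.walk.support.idxOf u + 1) =
        (p.walk.support.take l₁.length).take (p.walk.support.idxOf u + 1) := by
      rw [List.take_take, min_eq_left (by omega)]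
    exact List.take_subset _ _ (h2 ▸ h1)
  have : p.walk.support.take l₁.length = l₁ := by rw [hl]; exact List.take_left (l₁ := l₁) (l₂ := s :: l₂)
  exact hall u (this ▸ humem)

theorem frontier_insert {Rh : Set (GraphPath G)} {Y : Set V} {s x : V}
    (hx : x ∈ frontier Rh Y) : x = s ∨ x ∈ frontier Rh (insert s Y) := by
  obtain ⟨p, hp, hxp, h | h⟩ := hx
  · by_cases hxs : x = s
    · exact Or.inl hxs
    · refine Or.inr ⟨p, hp, hxp, Or.inl ⟨?_, fun u hu => Set.mem_insert_of_mem _ (h.2 u hu)⟩⟩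
      intro hc
      rcases Set.mem_insert_iff.1 hc with h' | h'
      · exact hxs h'
      · exact h.1 h'
  · exact Or.inr ⟨p, hp, hxp, Or.inr ⟨h.1, fun u hu => Set.mem_insert_of_mem _ (h.2 u hu)⟩⟩

/-- `p` is a path of the linkage not yet fully numbered. -/
def GoodP (Rh : Set (GraphPath G)) (Y : Set V) (p : GraphPath G) : Prop :=
  p ∈ Rh ∧ ∃ v ∈ p.support, v ∉ Y

theorem step [Fintype V] {Ah Bh : Set V} {Rh : Set (GraphPath G)}
    (hR : PerfectUniqueLinkage Ah Bh Rh) {Y : Set V} (hY : ValidY Rh Y)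
    (hne : Y ≠ Set.univ) : ∃ v ∉ Y, ValidY Rh (insert v Y) := by
  classical
  obtain ⟨hlink, huniq, hperf⟩ := hR
  obtain ⟨hpair, hends, hcovA, hcovB⟩ := hlink
  obtain ⟨v0, hv0⟩ : ∃ v, v ∉ Y := by
    by_contra hc; push_neg at hc; exact hne (Set.eq_univ_iff_forall.2 hc)
  by_cases hA : ∃ p ∈ Rh, ∃ s, (s ∈ p.support ∧ s ∉ Y ∧ ∀ u, beforeOn p u s → u ∈ Y) ∧
      ∀ z, G.Adj s z → z ∉ insert s Y → z ∈ frontier Rh (insert s Y)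
  · obtain ⟨p, hp, s, ⟨hs1, hs2, hs3⟩, hall⟩ := hA
    refine ⟨s, hs2, ?_, ?_⟩
    · intro p' hp' u v hbef hv
      rcases Set.mem_insert_iff.1 hv with rfl | hvY
      · have hpp : p' = p := eq_of_mem_support hpair hp' hp (beforeOn_spec hbef).2.1 hs1
        subst hpp
        exact Set.mem_insert_of_mem _ (hs3 u hbef)
      · exact Set.mem_insert_of_mem _ (hY.1 p' hp' u v hbef hvY)
    · intro u v hadj hu hv
      rcases Set.mem_insert_iff.1 hu with rfl | huY
      · exact Or.inr (hall v hadj hv)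
      · have hvY : v ∉ Y := fun h => hv (Set.mem_insert_of_mem _ h)
        rcases hY.2 u v hadj huY hvY with h | h
        · rcases frontier_insert (s := s) h with rfl | h2
          · exact absurd huY hs2
          · exact Or.inl h2
        · rcases frontier_insert (s := s) h with rfl | h2
          · exact absurd (Set.mem_insert _ _) hv
          · exact Or.inr h2
  · push_neg at hA
    exfalso
    obtain ⟨p0, hp0, hv0p⟩ := hperf v0
    have hgood0 : GoodP Rh Y p0 := ⟨hp0, v0, hv0p, hv0⟩
    haveI hne1 : Nonempty V := ⟨v0⟩
    haveI hne2 : Nonempty (GraphPath G) := ⟨p0⟩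
    have key : ∀ p : GraphPath G, ∃ (s : V) (z : V) (p' : GraphPath G), GoodP Rh Y p →
        (s ∈ p.support ∧ s ∉ Y ∧ (∀ u, beforeOn p u s → u ∈ Y)) ∧
        G.Adj s z ∧ z ∉ insert s Y ∧ z ∉ frontier Rh (insert s Y) ∧
        p' ∈ Rh ∧ z ∈ p'.support := by
      intro p
      by_cases hg : GoodP Rh Y p
      · obtain ⟨s, hs1, hs2, hs3⟩ := exists_frontierVert hg.2
        obtain ⟨z, hz1, hz2, hz3⟩ := hA p hg.1 s ⟨hs1, hs2, hs3⟩
        obtain ⟨p', hp', hzp'⟩ := hperf z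
        exact ⟨s, z, p', fun _ => ⟨⟨hs1, hs2, hs3⟩, hz1, hz2, hz3, hp', hzp'⟩⟩
      · exact ⟨Classical.arbitrary V, Classical.arbitrary V,
          Classical.arbitrary (GraphPath G), fun h => absurd h hg⟩
    choose sF zF J hd using key
    have hGoodJ : ∀ p, GoodP Rh Y p → GoodP Rh Y (J p) := by
      intro p hg
      obtain ⟨-, -, hz2, -, hJ, hzJ⟩ := hd p hg
      exact ⟨hJ, zF p, hzJ, fun h => hz2 (Set.mem_insert_of_mem _ h)⟩
    -- order lemma
    have hO1 : ∀ p p'', GoodP Rh Y p → GoodP Rh Y p'' → zF p ∈ p''.support →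
        beforeOn p'' (sF p'') (zF p) := by
      intro p p'' hg hg'' hzmem
      obtain ⟨⟨hs1, hs2, hs3⟩, hadj, hz2, hz3, hJ, hzJ⟩ := hd p hg
      obtain ⟨⟨hs1'', hs2'', hs3''⟩, -, -, -, -, -⟩ := hd p'' hg''
      have hzY : zF p ∉ Y := fun h => hz2 (Set.mem_insert_of_mem _ h)
      have hzs : zF p ≠ sF p'' := by
        intro he
        apply hz3
        exact ⟨p'', hg''.1, hzmem, Or.inl ⟨hz2,
          fun u hu => Set.mem_insert_of_mem _ (hs3'' u (by rwa [he] at hu))⟩⟩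
      have hnb : ¬ beforeOn p'' (zF p) (sF p'') := fun hb => hzY (hs3'' _ hb)
      rcases beforeOn_total (p := p'') (u := sF p'') hs1'' hzmem (fun h => hzs h.symm) with h | h
      · exact h
      · exact absurd h hnb
    -- finiteness
    have hRfin : Rh.Finite := by
      have hinj : Set.InjOn (fun p : GraphPath G => p.first) Rh := by
        intro p hp q hq he
        by_contra hne'
        have h1 : p.first ∈ p.support := p.walk.start_mem_support
        have h2 : p.first ∈ q.support := by
          show p.first ∈ q.walk.support
          rw [show p.first = q.first from he]
          exact q.walk.start_mem_support
        exact Set.disjoint_left.1 (hpair hp hq hne') h1 h2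
      exact Set.Finite.of_finite_image (Set.toFinite _) hinj
    haveI hfinG : Finite {p : GraphPath G // GoodP Rh Y p} :=
      (hRfin.subset (fun p hp => hp.1)).to_subtype
    have hGoodIt : ∀ n, GoodP Rh Y (J^[n] p0) := by
      intro n
      induction n with
      | zero => exact hgood0
      | succ n ih => rw [Function.iterate_succ_apply']; exact hGoodJ _ ih
    obtain ⟨m0, m0', hmm', hJmm⟩ := Finite.exists_ne_map_eq_of_infinite
      (fun n : ℕ => (⟨J^[n] p0, hGoodIt n⟩ : {p : GraphPath G // GoodP Rh Y p}))
    have hJmm' : J^[m0] p0 = J^[m0'] p0 := congrArg Subtype.val hJmm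
    obtain ⟨m, m', hmlt, hJeq⟩ : ∃ m m', m < m' ∧ J^[m] p0 = J^[m'] p0 := by
      rcases lt_or_gt_of_ne hmm' with h | h
      exacts [⟨m0, m0', h, hJmm'⟩, ⟨m0', m0, h, hJmm'.symm⟩]
    have hper : ∃ k, 0 < k ∧ J^[k] (J^[m] p0) = J^[m] p0 := by
      refine ⟨m' - m, by omega, ?_⟩
      rw [← Function.iterate_add_apply, (by omega : m' - m + m = m')]
      exact hJeq.symm
    set q : GraphPath G := J^[m] p0 with hqdef
    set k0 := Nat.find hper with hk0def
    obtain ⟨hk0pos, hk0eq⟩ := Nat.find_spec hper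
    have hk0min : ∀ m'' , m'' < k0 → ¬(0 < m'' ∧ J^[m''] q = q) := fun m'' h => Nat.find_min hper h
    have hGoodItq : ∀ a, GoodP Rh Y (J^[a] q) := by
      intro a
      rw [hqdef, ← Function.iterate_add_apply]
      exact hGoodIt _
    have hq : GoodP Rh Y q := hGoodItq 0
    set cyc : Set (GraphPath G) := {p | ∃ a, a < k0 ∧ J^[a] q = p} with hcycdef
    have hqcyc : q ∈ cyc := ⟨0, hk0pos, rfl⟩
    have hcycGood : ∀ p ∈ cyc, GoodP Rh Y p := by
      rintro p ⟨a, -, rfl⟩; exact hGoodItq a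
    have hJcyc : ∀ p ∈ cyc, J p ∈ cyc := by
      rintro p ⟨a, ha, rfl⟩
      by_cases hak : a + 1 < k0
      · exact ⟨a + 1, hak, Function.iterate_succ_apply' J a q⟩
      · refine ⟨0, hk0pos, ?_⟩
        have h1 : J (J^[a] q) = q := by
          rw [← Function.iterate_succ_apply' J a q, (by omega : Nat.succ a = k0), hk0eq]
        exact h1.symm
    have hJsurj : ∀ p ∈ cyc, ∃ p' ∈ cyc, J p' = p := by
      rintro p ⟨a, ha, rfl⟩
      cases a with
      | zero =>
        refine ⟨J^[k0 - 1] q, ⟨k0 - 1, by omega, rfl⟩, ?_⟩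
        have h1 : J (J^[k0 - 1] q) = q := by
          rw [← Function.iterate_succ_apply' J (k0 - 1) q, (by omega : Nat.succ (k0 - 1) = k0), hk0eq]
        exact h1
      | succ a => exact ⟨J^[a] q, ⟨a, by omega, rfl⟩, (Function.iterate_succ_apply' J a q).symm⟩
    have haux : ∀ a b, a < b → b < k0 → J^[a + 1] q = J^[b + 1] q → False := by
      intro a b hab hbk he
      have h1 : J^[k0 - (b + 1) + (a + 1)] q = J^[k0 - (b + 1)] (J^[a + 1] q) :=
        Function.iterate_add_apply J _ _ q
      have h2 : J^[k0 - (b + 1)] (J^[b + 1] q) = q := by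
        rw [← Function.iterate_add_apply, (by omega : k0 - (b + 1) + (b + 1) = k0), hk0eq]
      rw [he, h2] at h1
      exact hk0min (k0 - (b + 1) + (a + 1)) (by omega) ⟨by omega, h1⟩
    have hJinj : ∀ p ∈ cyc, ∀ p' ∈ cyc, J p = J p' → p = p' := by
      rintro p ⟨a, ha, rfl⟩ p' ⟨b, hb, rfl⟩ he
      rw [← Function.iterate_succ_apply' J a q, ← Function.iterate_succ_apply' J b q] at he
      rcases lt_trichotomy a b with h | h | h
      · exact absurd he (fun he => haux a b h hb he)
      · rw [h]
      · exact absurd he.symm (fun he => haux b a h ha he)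
    -- construction of the rerouted paths
    have hnpex : ∀ p, ∃ r : GraphPath G, p ∈ cyc →
        r.first = p.first ∧ r.last = (J p).last ∧
        r.walk.support = p.walk.support.take (p.walk.support.idxOf (sF p) + 1) ++
          (J p).walk.support.drop ((J p).walk.support.idxOf (zF p)) := by
      intro p
      by_cases hpc : p ∈ cyc
      · have hg : GoodP Rh Y p := hcycGood p hpc
        obtain ⟨⟨hs1, hs2, hs3⟩, hadj, hz2, hz3, hJmem, hzJ⟩ := hd p hg
        have hgJ : GoodP Rh Y (J p) := hGoodJ p hg
        have hsl : sF p ∈ p.walk.support := hs1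
        have hzl : zF p ∈ (J p).walk.support := hzJ
        have hsupp : ((p.walk.takeUntil (sF p) hsl).append
            (SimpleGraph.Walk.cons hadj ((J p).walk.dropUntil (zF p) hzl))).support =
            p.walk.support.take (p.walk.support.idxOf (sF p) + 1) ++
            (J p).walk.support.drop ((J p).walk.support.idxOf (zF p)) := by
          rw [SimpleGraph.Walk.support_append, SimpleGraph.Walk.support_cons, List.tail_cons,
            support_takeUntil_eq, support_dropUntil_eq]
        have hpath : ((p.walk.takeUntil (sF p) hsl).append
            (SimpleGraph.Walk.cons hadj ((J p).walk.dropUntil (zF p) hzl))).IsPath := by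
          rw [SimpleGraph.Walk.isPath_def, hsupp, List.nodup_append]
          refine ⟨(List.take_sublist _ _).nodup p.isPath.support_nodup,
            (List.drop_sublist _ _).nodup (J p).isPath.support_nodup, ?_⟩
          by_cases hJp : J p = p
          · have hls : (J p).walk.support = p.walk.support :=
              congrArg (fun r : GraphPath G => r.walk.support) hJp
            have hbef : beforeOn p (sF p) (zF p) := by
              have h := hO1 p (J p) hg hgJ hzJ
              rwa [hJp] at h
            have hidx := (beforeOn_spec hbef).2.2.2
            rw [hls]
            exact fun a ha b hb hab => take_disjoint_drop p.isPath.support_nodup (by omega) ha (hab ▸ hb)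
          · intro x hx1 y hx2 hxy
            subst hxy
            have hx1' : x ∈ p.support := List.take_subset _ _ hx1
            have hx2' : x ∈ (J p).support := List.drop_subset _ _ hx2
            exact Set.disjoint_left.1 (hpair hg.1 hJmem (fun h => hJp h.symm)) hx1' hx2'
        exact ⟨⟨p.first, (J p).last, _, hpath⟩, fun _ => ⟨rfl, rfl, hsupp⟩⟩
      · exact ⟨p, fun h => absurd h hpc⟩
    choose np hnp using hnpex
    have hnpsub : ∀ p ∈ cyc, ∀ x, x ∈ (np p).support → x ∈ p.support ∨ x ∈ (J p).support := by
      intro p hpc x hx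
      have h3 := (hnp p hpc).2.2
      have hx' : x ∈ (np p).walk.support := hx
      rw [h3] at hx'
      rcases List.mem_append.1 hx' with h | h
      · exact Or.inl (List.take_subset _ _ h)
      · exact Or.inr (List.drop_subset _ _ h)
    have hsmem : ∀ p ∈ cyc, sF p ∈ (np p).support := by
      intro p hpc
      have h3 := (hnp p hpc).2.2
      show sF p ∈ (np p).walk.support
      rw [h3]
      refine List.mem_append.2 (Or.inl ?_)
      exact mem_take_self ((hd p (hcycGood p hpc)).1.1 : sF p ∈ p.walk.support)
    -- disjointness: new vs new
    have hdisj2 : ∀ p ∈ cyc, ∀ p' ∈ cyc, p ≠ p' →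
        Disjoint (np p).support (np p').support := by
      intro p hpc p' hpc' hne'
      have hg : GoodP Rh Y p := hcycGood p hpc
      have hg' : GoodP Rh Y p' := hcycGood p' hpc'
      have hgJ : GoodP Rh Y (J p) := hGoodJ p hg
      have hgJ' : GoodP Rh Y (J p') := hGoodJ p' hg'
      rw [Set.disjoint_left]
      intro x hx hx'
      have h3 := (hnp p hpc).2.2
      have h3' := (hnp p' hpc').2.2
      have hx1 : x ∈ (np p).walk.support := hx
      have hx1' : x ∈ (np p').walk.support := hx'
      rw [h3] at hx1
      rw [h3'] at hx1'
      have hcross : ∀ pa pb : GraphPath G, pa ∈ Rh → pb ∈ Rh → pa ≠ pb →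
          ∀ {y : V}, y ∈ pa.walk.support → y ∈ pb.walk.support → False := by
        intro pa pb ha hb hnab y hya hyb
        exact Set.disjoint_left.1 (hpair ha hb hnab) hya hyb
      -- key sub-arg: x in take-part of path r and drop-part of J r' with r = J r'
      have hmix : ∀ pa pb : GraphPath G, pa ∈ cyc → pb ∈ cyc → pa = J pb →
          ∀ {y : V}, y ∈ pa.walk.support.take (pa.walk.support.idxOf (sF pa) + 1) →
            y ∈ (J pb).walk.support.drop ((J pb).walk.support.idxOf (zF pb)) → False := by
        intro pa pb hac hbc hab y hy1 hy2
        have hga : GoodP Rh Y pa := hcycGood pa hac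
        have hgb : GoodP Rh Y pb := hcycGood pb hbc
        have hzmem : zF pb ∈ pa.support := by
          show zF pb ∈ pa.walk.support
          rw [congrArg (fun r : GraphPath G => r.walk.support) hab]
          exact (hd pb hgb).2.2.2.2.2
        have hbef : beforeOn pa (sF pa) (zF pb) := hO1 pb pa hgb hga hzmem
        have hidx := (beforeOn_spec hbef).2.2.2
        have hy2' : y ∈ pa.walk.support.drop (pa.walk.support.idxOf (zF pb)) := by
          have hls : (J pb).walk.support = pa.walk.support :=
            congrArg (fun r : GraphPath G => r.walk.support) hab.symm
          rw [hls] at hy2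
          exact hy2
        exact take_disjoint_drop pa.isPath.support_nodup (by omega) hy1 hy2'
      rcases List.mem_append.1 hx1 with hxa | hxb <;> rcases List.mem_append.1 hx1' with hya | hyb
      · exact hcross p p' hg.1 hg'.1 hne' (List.take_subset _ _ hxa) (List.take_subset _ _ hya)
      · by_cases hpp : p = J p'
        · exact hmix p p' hpc hpc' hpp hxa hyb
        · exact hcross p (J p') hg.1 hgJ'.1 hpp (List.take_subset _ _ hxa)
            (List.drop_subset _ _ hyb)
      · by_cases hpp : p' = J p
        · exact hmix p' p hpc' hpc hpp hya hxb
        · exact hcross p' (J p) hg'.1 hgJ.1 hpp (List.take_subset _ _ hya)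
            (List.drop_subset _ _ hxb)
      · have hJne : J p ≠ J p' := fun h => hne' (hJinj p hpc p' hpc' h)
        exact hcross (J p) (J p') hgJ.1 hgJ'.1 hJne (List.drop_subset _ _ hxb)
          (List.drop_subset _ _ hyb)
    -- disjointness: old vs new
    have hdisj1 : ∀ r, r ∈ Rh → r ∉ cyc → ∀ p ∈ cyc, Disjoint r.support (np p).support := by
      intro r hr hrc p hpc
      rw [Set.disjoint_left]
      intro x hx hx'
      rcases hnpsub p hpc x hx' with h | h
      · have hne' : r ≠ p := fun he => hrc (he ▸ hpc)
        exact Set.disjoint_left.1 (hpair hr (hcycGood p hpc).1 hne') hx h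
      · have hJc := hJcyc p hpc
        have hne' : r ≠ J p := fun he => hrc (he ▸ hJc)
        exact Set.disjoint_left.1 (hpair hr (hGoodJ p (hcycGood p hpc)).1 hne') hx h
    -- the new linkage
    set R' : Set (GraphPath G) := (Rh \ cyc) ∪ {r | ∃ p ∈ cyc, np p = r} with hR'def
    have hlink' : IsLinkage Ah Bh R' := by
      refine ⟨?_, ?_, ?_, ?_⟩
      · intro x hx y hy hxy
        rcases hx with hx | ⟨p, hpc, rfl⟩ <;> rcases hy with hy | ⟨p', hpc', rfl⟩
        · exact hpair hx.1 hy.1 hxy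
        · exact hdisj1 x hx.1 hx.2 p' hpc'
        · exact (hdisj1 y hy.1 hy.2 p hpc).symm
        · by_cases hpp' : p = p'
          · exact absurd (by rw [hpp']) hxy
          · exact hdisj2 p hpc p' hpc' hpp'
      · intro r hr
        rcases hr with hr | ⟨p, hpc, rfl⟩
        · exact hends r hr.1
        · constructor
          · rw [(hnp p hpc).1]; exact (hends p (hcycGood p hpc).1).1
          · rw [(hnp p hpc).2.1]; exact (hends (J p) (hGoodJ p (hcycGood p hpc)).1).2
      · intro a ha
        obtain ⟨r, hr, hfi⟩ := hcovA a ha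
        by_cases hrc : r ∈ cyc
        · exact ⟨np r, Or.inr ⟨r, hrc, rfl⟩, by rw [(hnp r hrc).1]; exact hfi⟩
        · exact ⟨r, Or.inl ⟨hr, hrc⟩, hfi⟩
      · intro b hb
        obtain ⟨r, hr, hla⟩ := hcovB b hb
        by_cases hrc : r ∈ cyc
        · obtain ⟨p', hpc', hJp'⟩ := hJsurj r hrc
          exact ⟨np p', Or.inr ⟨p', hpc', rfl⟩, by rw [(hnp p' hpc').2.1, hJp']; exact hla⟩
        · exact ⟨r, Or.inl ⟨hr, hrc⟩, hla⟩
    have heq := huniq R' hlink'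
    -- np q is not in Rh
    have hnq : np q ∉ Rh := by
      intro hmem
      obtain ⟨⟨hs1, hs2, hs3⟩, hadj, hz2, hz3, hJmem, hzJ⟩ := hd q hq
      have hsm : sF q ∈ (np q).support := hsmem q hqcyc
      have hnpq : np q = q := eq_of_mem_support hpair hmem hq.1 hsm hs1
      by_cases hJq : J q = q
      · obtain ⟨u, hu1, hu2⟩ : ∃ u, beforeOn (J q) u (zF q) ∧ u ∉ insert (sF q) Y := by
          by_contra hc
          push_neg at hc
          exact hz3 ⟨J q, hJmem, hzJ, Or.inl ⟨hz2, hc⟩⟩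
        have hu1' : beforeOn q u (zF q) := by rwa [hJq] at hu1
        have huY : u ∉ Y := fun h => hu2 (Set.mem_insert_of_mem _ h)
        have hus : u ≠ sF q := fun h => hu2 (h ▸ Set.mem_insert _ _)
        have huq : u ∈ q.walk.support := (beforeOn_spec hu1').1
        have hbsu : beforeOn q (sF q) u := by
          rcases beforeOn_total (p := q) hs1 huq (fun h => hus h.symm) with h | h
          · exact h
          · exact absurd (hs3 u h) huY
        have hi1 := (beforeOn_spec hbsu).2.2.2
        have hi2 := (beforeOn_spec hu1').2.2.2
        have h3 := (hnp q hqcyc).2.2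
        have hls : (J q).walk.support = q.walk.support :=
          congrArg (fun r : GraphPath G => r.walk.support) hJq
        rw [hls] at h3
        have hzs : zF q = zF q := rfl
        have husupp : u ∈ (np q).walk.support := by
          rw [congrArg (fun r : GraphPath G => r.walk.support) hnpq]
          exact huq
        rw [h3] at husupp
        rcases List.mem_append.1 husupp with h | h
        · have := idx_lt_of_mem_take h
          omega
        · have := le_idx_of_mem_drop q.isPath.support_nodup h
          omega
      · have hl1 : (np q).last ∈ (np q).support := (np q).walk.end_mem_support
        have hl2 : (J q).last ∈ (np q).support := by
          rw [← (hnp q hqcyc).2.1]; exact hl1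
        have hl3 : (J q).last ∈ q.support := by
          rw [← congrArg (fun r : GraphPath G => r.support) hnpq]
          exact hl2
        have hl4 : (J q).last ∈ (J q).support := (J q).walk.end_mem_support
        exact hJq (eq_of_mem_support hpair hJmem hq.1 hl4 hl3)
    exact hnq (heq ▸ (Or.inr ⟨q, hqcyc, rfl⟩ : np q ∈ R'))

end NumLem

end StepLemma

section ChainSection

namespace NumLem

open SimpleGraph
open scoped Classical

variable {V : Type} [Fintype V] {G : SimpleGraph V}

/-- The greedy chain of valid prefix sets. -/
noncomputable def chain {Ah Bh : Set V} {Rh : Set (GraphPath G)}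
    (hR : PerfectUniqueLinkage Ah Bh Rh) : ℕ → {Y : Set V // ValidY Rh Y}
  | 0 => ⟨∅, valid_empty Rh⟩
  | (t + 1) =>
    if h : (chain hR t).1 = Set.univ then chain hR t
    else ⟨insert (Classical.choose (step hR (chain hR t).2 h)) (chain hR t).1,
      (Classical.choose_spec (step hR (chain hR t).2 h)).2⟩

theorem chain_succ_univ {Ah Bh : Set V} {Rh : Set (GraphPath G)}
    (hR : PerfectUniqueLinkage Ah Bh Rh) {t : ℕ} (h : (chain hR t).1 = Set.univ) :
    chain hR (t + 1) = chain hR t := by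
  rw [chain, dif_pos h]

theorem chain_succ_ne {Ah Bh : Set V} {Rh : Set (GraphPath G)}
    (hR : PerfectUniqueLinkage Ah Bh Rh) {t : ℕ} (h : (chain hR t).1 ≠ Set.univ) :
    ∃ v ∉ (chain hR t).1, (chain hR (t + 1)).1 = insert v (chain hR t).1 := by
  refine ⟨Classical.choose (step hR (chain hR t).2 h),
    (Classical.choose_spec (step hR (chain hR t).2 h)).1, ?_⟩
  rw [chain, dif_neg h]

end NumLem

end ChainSection

/-- Lemma 4.6, the numbering lemma of Robertson–Seymour: if `G`
has the perfect unique linkage property with respect to `(A, B)` with unique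
linkage `R`, then there is a bijection `μ : V(G) → {1, …, |V(G)|}` that is strictly
increasing along every path of `R`, and such that for every `0 < t ≤ |V(G)|` the
separator `S_t` disconnects `Y_t = {v : μ(v) < t}` from `Z_t = {v : μ(v) ≥ t}`:
no path of `G` avoiding `S_t` connects a vertex of `Y_t` to a vertex of `Z_t`. -/
theorem numbering_lemma {V : Type} [Fintype V] {G : SimpleGraph V}
    (Ah Bh : Set V) (hcard : Ah.ncard = Bh.ncard)
    (Rh : Set (GraphPath G)) (hR : PerfectUniqueLinkage Ah Bh Rh) :
    ∃ μ : V ≃ Fin (Fintype.card V),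
      (∀ p ∈ Rh, ∀ u v : V, beforeOn p u v → (μ u).val < (μ v).val) ∧
      (∀ t : ℕ, 0 < t → t ≤ Fintype.card V →
        ∀ q : GraphPath G,
          (∀ x ∈ q.support, x ∉ sepSet Rh μ t) →
          ¬ (((μ q.first).val + 1 < t ∧ t ≤ (μ q.last).val + 1) ∨
             ((μ q.last).val + 1 < t ∧ t ≤ (μ q.first).val + 1))) := by
  classical
  set n := Fintype.card V with hn
  set f : ℕ → Set V := fun t => (NumLem.chain hR t).1 with hfdef
  have hval : ∀ t, NumLem.ValidY Rh (f t) := fun t => (NumLem.chain hR t).2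
  have hf0 : f 0 = ∅ := rfl
  have hmono1 : ∀ t, f t ⊆ f (t + 1) := by
    intro t
    by_cases h : f t = Set.univ
    · rw [show f (t + 1) = f t from congrArg Subtype.val (NumLem.chain_succ_univ hR h)]
    · obtain ⟨v, hv, he⟩ := NumLem.chain_succ_ne hR h
      rw [show f (t + 1) = insert v (f t) from he]
      exact Set.subset_insert _ _
  have hmono : ∀ s t, s ≤ t → f s ⊆ f t := by
    intro s t hst
    induction t with
    | zero => rw [Nat.le_zero.1 hst]
    | succ t ih =>
      rcases Nat.lt_or_ge s (t + 1) with h | h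
      · exact (ih (by omega)).trans (hmono1 t)
      · rw [(by omega : s = t + 1)]
  have hcardf : ∀ t, f t = Set.univ ∨ (f t).ncard = t := by
    intro t
    induction t with
    | zero => exact Or.inr (by rw [hf0]; simp)
    | succ t ih =>
      by_cases h : f t = Set.univ
      · left
        rw [show f (t + 1) = f t from congrArg Subtype.val (NumLem.chain_succ_univ hR h)]
        exact h
      · rcases ih with h' | h'
        · exact absurd h' h
        · obtain ⟨v, hv, he⟩ := NumLem.chain_succ_ne hR h
          right
          rw [show f (t + 1) = insert v (f t) from he, Set.ncard_insert_of_notMem hv, h']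
  have huniv : f n = Set.univ := by
    rcases hcardf n with h | h
    · exact h
    · apply Set.eq_of_subset_of_ncard_le (Set.subset_univ _)
      rw [Set.ncard_univ, Nat.card_eq_fintype_card, h]
  have hex : ∀ v : V, ∃ t, v ∈ f (t + 1) := by
    intro v
    have hpos : 0 < n := by rw [hn]; exact Fintype.card_pos_iff.2 ⟨v⟩
    refine ⟨n - 1, ?_⟩
    rw [(by omega : n - 1 + 1 = n), huniv]
    trivial
  set ν : V → ℕ := fun v => Nat.find (hex v) with hνdef
  have hmem_iff : ∀ (v : V) (s : ℕ), v ∈ f s ↔ ν v < s := by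
    intro v s
    constructor
    · intro h
      cases s with
      | zero => rw [hf0] at h; exact absurd h (Set.notMem_empty v)
      | succ s => exact Nat.lt_succ_of_le (Nat.find_min' (hex v) h)
    · intro h
      exact hmono (ν v + 1) s h (Nat.find_spec (hex v))
  have hνlt : ∀ v, ν v < n := fun v => (hmem_iff v n).1 (by rw [huniv]; trivial)
  have hinj : ∀ u v : V, ν u = ν v → u = v := by
    intro u v he
    by_contra huv
    have hu1 : u ∈ f (ν u + 1) := Nat.find_spec (hex u)
    have hv1 : v ∈ f (ν u + 1) := by rw [he]; exact Nat.find_spec (hex v)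
    have hu0 : u ∉ f (ν u) := fun h => by
      have := (hmem_iff u (ν u)).1 h; omega
    have hv0 : v ∉ f (ν u) := fun h => by
      have := (hmem_iff v (ν u)).1 h; omega
    by_cases hU : f (ν u) = Set.univ
    · exact hu0 (hU ▸ Set.mem_univ u)
    · obtain ⟨w, hw, hesucc⟩ := NumLem.chain_succ_ne hR hU
      rw [show f (ν u + 1) = insert w (f (ν u)) from hesucc] at hu1 hv1
      have h1 : u = w := (Set.mem_insert_iff.1 hu1).resolve_right hu0
      have h2 : v = w := (Set.mem_insert_iff.1 hv1).resolve_right hv0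
      exact huv (h1.trans h2.symm)
  have hbij : Function.Bijective (fun v => (⟨ν v, hνlt v⟩ : Fin n)) := by
    apply (Fintype.bijective_iff_injective_and_card _).2
    constructor
    · intro u v h
      exact hinj u v (congrArg Fin.val h)
    · simp [hn]
  set μ : V ≃ Fin n := Equiv.ofBijective _ hbij with hμdef
  have hμval : ∀ v, (μ v).val = ν v := fun v => rfl
  refine ⟨μ, ?_, ?_⟩
  · intro p hp u v hbef
    have hv1 : v ∈ f (ν v + 1) := Nat.find_spec (hex v)
    have hu1 : u ∈ f (ν v + 1) := (hval (ν v + 1)).1 p hp u v hbef hv1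
    have hle : ν u < ν v + 1 := (hmem_iff u (ν v + 1)).1 hu1
    have hne' : u ≠ v := (NumLem.beforeOn_spec hbef).2.2.1
    have hnene : ν u ≠ ν v := fun h => hne' (hinj u v h)
    show ν u < ν v
    omega
  · intro t ht0 htn q hav
    have hsep : sepSet Rh μ t = NumLem.frontier Rh (f (t - 1)) := by
      ext v
      constructor
      · rintro ⟨p, hp, hvp, h | h⟩
        · refine ⟨p, hp, hvp, Or.inl ⟨?_, ?_⟩⟩
          · intro hc
            have h2 := (hmem_iff v (t - 1)).1 hc
            have h1 : t ≤ ν v + 1 := h.1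
            omega
          · intro u hu
            have h2 : ν u + 1 < t := h.2 u hu
            exact (hmem_iff u (t - 1)).2 (by omega)
        · exact ⟨p, hp, hvp, Or.inr ⟨h.1, fun u hu =>
            (hmem_iff u (t - 1)).2 (by have h2 : ν u + 1 < t := h.2 u hu; omega)⟩⟩
      · rintro ⟨p, hp, hvp, h | h⟩
        · refine ⟨p, hp, hvp, Or.inl ⟨?_, ?_⟩⟩
          · have h2 : ¬ ν v < t - 1 := fun hc => h.1 ((hmem_iff v (t - 1)).2 hc)
            show t ≤ ν v + 1
            omega
          · intro u hu
            have h2 := (hmem_iff u (t - 1)).1 (h.2 u hu)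
            show ν u + 1 < t
            omega
        · refine ⟨p, hp, hvp, Or.inr ⟨h.1, fun u hu => ?_⟩⟩
          have h2 := (hmem_iff u (t - 1)).1 (h.2 u hu)
          show ν u + 1 < t
          omega
    intro hcross
    have hfront := (hval (t - 1)).2
    rcases hcross with ⟨h1, h2⟩ | ⟨h1, h2⟩
    · have h1' : ν q.first + 1 < t := h1
      have h2' : t ≤ ν q.last + 1 := h2
      have hf1 : q.first ∈ f (t - 1) := (hmem_iff _ _).2 (by omega)
      have hf2 : q.last ∉ f (t - 1) := fun hc => by
        have := (hmem_iff _ _).1 hc; omega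
      obtain ⟨u, v, hadj, hum, hvm, huS, hvS⟩ := NumLem.exists_cross q.walk hf1 hf2
      rcases hfront u v hadj huS hvS with h | h
      · exact hav u hum (hsep ▸ h)
      · exact hav v hvm (hsep ▸ h)
    · have h1' : ν q.last + 1 < t := h1
      have h2' : t ≤ ν q.first + 1 := h2
      have hf1 : q.last ∈ f (t - 1) := (hmem_iff _ _).2 (by omega)
      have hf2 : q.first ∉ f (t - 1) := fun hc => by
        have := (hmem_iff _ _).1 hc; omega
      obtain ⟨u, v, hadj, hum, hvm, huS, hvS⟩ := NumLem.exists_cross q.walk.reverse hf1 hf2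
      have hum' : u ∈ q.walk.support := by
        rw [SimpleGraph.Walk.support_reverse] at hum
        exact List.mem_reverse.1 hum
      have hvm' : v ∈ q.walk.support := by
        rw [SimpleGraph.Walk.support_reverse] at hvm
        exact List.mem_reverse.1 hvm
      rcases hfront u v hadj huS hvS with h | h
      · exact hav u hum' (hsep ▸ h)
      · exact hav v hvm' (hsep ▸ h)
end
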